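/- arXiv:2005.13891 — 7 statements merged into one kernel-verified Lean document; each statement's English description precedes it below -/
import Mathlib

section
/- Let H₁ and H₂ be infinite-dimensional separable complex Hilbert spaces and let v and w be weight sequences. Then E_v(H₁,H₂) ⊆ E_w(H₁,H₂) if and only if there exists a constant M ≥ 0 such that v_k ≤ M·w_k for every k ≥ 1. -/
open Filter Topology

noncomputable section

def IsWeight (w : ℕ → ℝ) : Prop :=
  (∀ k, 1 ≤ k → w (k + 1) ≤ w k) ∧ (∀ k, 1 ≤ k → 0 ≤ w k) ∧
    Filter.Tendsto w Filter.atTop (nhds 0)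

def sNum {H₁ H₂ : Type*} [NormedAddCommGroup H₁] [NormedSpace ℂ H₁]
    [NormedAddCommGroup H₂] [NormedSpace ℂ H₂] (k : ℕ) (A : H₁ →L[ℂ] H₂) : ℝ :=
  sInf {c : ℝ | ∃ F : H₁ →L[ℂ] H₂,
    Module.rank ℂ (LinearMap.range (F : H₁ →ₗ[ℂ] H₂)) < (k : Cardinal) ∧ c = ‖A - F‖}

def MemE {H₁ H₂ : Type*} [NormedAddCommGroup H₁] [NormedSpace ℂ H₁]
    [NormedAddCommGroup H₂] [NormedSpace ℂ H₂] (w : ℕ → ℝ) (A : H₁ →L[ℂ] H₂) : Prop :=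
  IsCompactOperator A ∧ ∃ M : ℝ, 0 ≤ M ∧ ∀ k, 1 ≤ k → sNum k A ≤ M * w k

def gaugeE {H₁ H₂ : Type*} [NormedAddCommGroup H₁] [NormedSpace ℂ H₁]
    [NormedAddCommGroup H₂] [NormedSpace ℂ H₂] (w : ℕ → ℝ) (A : H₁ →L[ℂ] H₂) : ℝ :=
  sInf {M : ℝ | 0 ≤ M ∧ ∀ k, 1 ≤ k → sNum k A ≤ M * w k}

def dbl (w : ℕ → ℝ) (k : ℕ) : ℝ := w ((k + 1) / 2)

def gmean (w : ℕ → ℝ) (k : ℕ) : ℝ := (∏ n ∈ Finset.Icc 1 k, w n) ^ ((1 : ℝ) / (k : ℝ))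

def algMult {H : Type*} [NormedAddCommGroup H] [NormedSpace ℂ H] (A : H →L[ℂ] H) (z : ℂ) : ℕ :=
  Module.finrank ℂ (Module.End.maxGenEigenspace (A : H →ₗ[ℂ] H) z)

def IsEigSeq {H : Type*} [NormedAddCommGroup H] [NormedSpace ℂ H]
    (A : H →L[ℂ] H) (lam : ℕ → ℂ) : Prop :=
  (∀ k, 1 ≤ k → ‖lam (k + 1)‖ ≤ ‖lam k‖) ∧
  ∀ z : ℂ, z ≠ 0 →
    {k : ℕ | 1 ≤ k ∧ lam k = z}.Finite ∧ {k : ℕ | 1 ≤ k ∧ lam k = z}.ncard = algMult A z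

def IsSchurDecomp {H : Type*} [NormedAddCommGroup H] [InnerProductSpace ℂ H] [CompleteSpace H]
    (A D N : H →L[ℂ] H) : Prop :=
  A = D + N ∧ IsCompactOperator D ∧ IsCompactOperator N ∧ IsStarNormal D ∧
  (∀ z : ℂ, z ≠ 0 → algMult D z = algMult A z) ∧
  spectrum ℂ D = spectrum ℂ A ∧
  spectrum ℂ N = {0} ∧
  ∀ z : ℂ, z ∉ spectrum ℂ A →
    spectrum ℂ (Ring.inverse (algebraMap ℂ (H →L[ℂ] H) z - D) * N) = {0}

def Fw (C : ℝ) (w : ℕ → ℝ) (r : ℝ) : ℝ :=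
  (1 + r * w 1) *
    (1 + ∑' k : ℕ, (∏ n ∈ Finset.Icc 1 (k + 1), w n) ^ 2 * (C * r) ^ (2 * (k + 1)))

def Ftilde (C : ℝ) (w : ℕ → ℝ) (r : ℝ) : ℝ := r * Fw C w r

def specVar (s t : Set ℂ) : ℝ := ⨆ z : s, Metric.infDist (z : ℂ) t

def hausD (s t : Set ℂ) : ℝ := max (specVar s t) (specVar t s)

def pseudoSpec {H : Type*} [NormedAddCommGroup H] [NormedSpace ℂ H] [CompleteSpace H]
    (ε : ℝ) (A : H →L[ℂ] H) : Set ℂ :=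
  spectrum ℂ A ∪ {z : ℂ | z ∉ spectrum ℂ A ∧ 1 / ε < ‖resolvent A z‖}

section AuxStmt0
open Submodule
open scoped ComplexInnerProductSpace


lemma countable_orthonormal {H : Type*} [NormedAddCommGroup H] [InnerProductSpace ℂ H]
    [TopologicalSpace.SeparableSpace H] {s : Set H}
    (hs : Orthonormal ℂ ((↑) : s → H)) : s.Countable := by
  obtain ⟨D, hDc, hDd⟩ := TopologicalSpace.exists_countable_dense H
  have key : ∀ b : s, ∃ y : D, dist (b : H) (y : H) < 1/2 := by
    intro b
    obtain ⟨y, hy, hdy⟩ := hDd.exists_dist_lt (b : H) (by norm_num : (0:ℝ) < 1/2)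
    exact ⟨⟨y, hy⟩, hdy⟩
  choose f hf using key
  have hsep : ∀ b b' : s, b ≠ b' → 1 < dist (b : H) (b' : H) := by
    intro b b' hne
    have h0 : (inner (𝕜 := ℂ) (b:H) (b':H)) = 0 := hs.2 hne
    have hsq : ‖(b:H) - (b':H)‖^2 = 2 := by
      rw [@norm_sub_sq ℂ]
      rw [h0]
      simp [hs.1 b, hs.1 b']
      norm_num
    have hd : dist (b : H) (b' : H) ^ 2 = 2 := by rw [dist_eq_norm]; exact hsq
    nlinarith [dist_nonneg (x := (b:H)) (y := (b':H))]
  have hinj : Function.Injective f := by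
    intro b b' hbb
    by_contra hne
    have h1 := hf b
    have h2 := hf b'
    rw [hbb] at h1
    have := hsep b b' hne
    have htri := dist_triangle (b : H) ((f b' : H)) ((b' : H))
    rw [dist_comm ((f b' : H)) ((b' : H))] at htri
    linarith
  haveI : Countable D := hDc.to_subtype
  haveI : Countable s := Function.Injective.countable hinj
  exact Set.countable_coe_iff.mp this

lemma exists_hb (H : Type*) [NormedAddCommGroup H] [InnerProductSpace ℂ H] [CompleteSpace H]
    [TopologicalSpace.SeparableSpace H] (hinf : ¬ FiniteDimensional ℂ H) :
    Nonempty (HilbertBasis ℕ ℂ H) := by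
  obtain ⟨s, b, hb⟩ := exists_hilbertBasis ℂ H
  have horth : Orthonormal ℂ ((↑) : s → H) := hb ▸ b.orthonormal
  have hcount : s.Countable := countable_orthonormal horth
  have hrange : Set.range ⇑b = s := by rw [hb]; exact Subtype.range_coe
  have hinfs : s.Infinite := by
    by_contra hfin
    rw [Set.not_infinite] at hfin
    apply hinf
    haveI h1 : FiniteDimensional ℂ (span ℂ (Set.range ⇑b)) := by
      rw [hrange]; exact FiniteDimensional.span_of_finite ℂ hfin
    have h2 := b.dense_span
    have h3 : (span ℂ (Set.range ⇑b)).topologicalClosure = span ℂ (Set.range ⇑b) :=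
      SetLike.ext' (Submodule.closed_of_finiteDimensional _).closure_eq
    rw [h3] at h2
    haveI : FiniteDimensional ℂ (⊤ : Submodule ℂ H) := h2 ▸ h1
    exact (Submodule.topEquiv (R := ℂ) (M := H)).finiteDimensional
  haveI : Countable s := hcount.to_subtype
  haveI : Infinite s := hinfs.to_subtype
  obtain ⟨d⟩ := nonempty_denumerable s
  let e : s ≃ ℕ := d.eqv s
  have horth' : Orthonormal ℂ (⇑b ∘ e.symm) := b.orthonormal.comp _ e.symm.injective
  have hsp : ⊤ ≤ (span ℂ (Set.range (⇑b ∘ e.symm))).topologicalClosure := by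
    rw [Set.range_comp, e.symm.surjective.range_eq, Set.image_univ, b.dense_span]
  exact ⟨HilbertBasis.mk horth' hsp⟩

lemma compact_of_finiteRank {H₁ H₂ : Type*} [NormedAddCommGroup H₁] [NormedSpace ℂ H₁]
    [NormedAddCommGroup H₂] [NormedSpace ℂ H₂] (F : H₁ →L[ℂ] H₂)
    (h : FiniteDimensional ℂ (LinearMap.range (F : H₁ →ₗ[ℂ] H₂))) : IsCompactOperator F := by
  rw [isCompactOperator_iff_exists_mem_nhds_image_subset_compact]
  refine ⟨Metric.closedBall 0 1, Metric.closedBall_mem_nhds 0 one_pos,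
    Subtype.val '' (Metric.closedBall (0 : LinearMap.range (F : H₁ →ₗ[ℂ] H₂)) ‖F‖), ?_, ?_⟩
  · exact (ProperSpace.isCompact_closedBall _ _).image continuous_subtype_val
  · rintro y ⟨x, hx, rfl⟩
    refine ⟨⟨F x, LinearMap.mem_range_self _ x⟩, ?_, rfl⟩
    rw [Metric.mem_closedBall, dist_zero_right]
    have : ‖(⟨F x, LinearMap.mem_range_self _ x⟩ : LinearMap.range (F : H₁ →ₗ[ℂ] H₂))‖ = ‖F x‖ := rfl
    rw [this]
    calc ‖F x‖ ≤ ‖F‖ * ‖x‖ := F.le_opNorm x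
      _ ≤ ‖F‖ * 1 := by
          have : ‖x‖ ≤ 1 := by rwa [Metric.mem_closedBall, dist_zero_right] at hx
          exact mul_le_mul_of_nonneg_left this (norm_nonneg F)
      _ = ‖F‖ := mul_one _

local notation "ℓ2" => lp (fun _ : ℕ => ℂ) 2

lemma rp2 (x : ℝ) : x ^ (2:ENNReal).toReal = x ^ 2 := by
  rw [show (2:ENNReal).toReal = ((2:ℕ):ℝ) by norm_num, Real.rpow_natCast]

lemma nc (a : ℝ) (z : ℂ) : ‖(a : ℂ) * z‖ = |a| * ‖z‖ := by
  rw [norm_mul, Complex.norm_real, Real.norm_eq_abs]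

lemma memD {a : ℕ → ℝ} {C : ℝ} (hC : ∀ n, |a n| ≤ C) (x : ℓ2) :
    Memℓp (fun n => (a n : ℂ) * x n) 2 := by
  apply memℓp_gen
  have hs : Summable fun n => C ^ 2 * ‖(x : ∀ _, ℂ) n‖ ^ (2:ENNReal).toReal :=
    ((lp.memℓp x).summable (by norm_num)).mul_left _
  refine Summable.of_nonneg_of_le (fun n => ?_) (fun n => ?_) hs
  · exact Real.rpow_nonneg (norm_nonneg _) _
  · rw [rp2, rp2, nc, mul_pow]
    have h1 : |a n| ^ 2 ≤ C ^ 2 := pow_le_pow_left₀ (abs_nonneg _) (hC n) 2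
    exact mul_le_mul_of_nonneg_right h1 (by positivity)

lemma diag_apply_norm_le (a : ℕ → ℝ) {C : ℝ} (hC0 : 0 ≤ C) (hC : ∀ n, |a n| ≤ C)
    (x : ℓ2) (h : Memℓp (fun n => (a n : ℂ) * x n) 2) :
    ‖(⟨fun n => (a n : ℂ) * x n, h⟩ : ℓ2)‖ ≤ C * ‖x‖ := by
  apply lp.norm_le_of_forall_sum_le (by norm_num) (mul_nonneg hC0 (norm_nonneg x))
  intro s
  calc ∑ i ∈ s, ‖(a i : ℂ) * x i‖ ^ (2:ENNReal).toReal
      ≤ ∑ i ∈ s, C^2 * ‖(x : ∀ _, ℂ) i‖ ^ (2:ENNReal).toReal := by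
        refine Finset.sum_le_sum fun i _ => ?_
        rw [rp2, rp2, nc, mul_pow]
        exact mul_le_mul_of_nonneg_right (pow_le_pow_left₀ (abs_nonneg _) (hC i) 2) (by positivity)
    _ = C^2 * ∑ i ∈ s, ‖(x : ∀ _, ℂ) i‖ ^ (2:ENNReal).toReal := (Finset.mul_sum _ _ _).symm
    _ ≤ C^2 * ‖x‖ ^ (2:ENNReal).toReal :=
        mul_le_mul_of_nonneg_left (lp.sum_rpow_le_norm_rpow (by norm_num) x s) (by positivity)
    _ = (C * ‖x‖) ^ (2:ENNReal).toReal := by rw [rp2, rp2]; ring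

def diag (a : ℕ → ℝ) {C : ℝ} (hC0 : 0 ≤ C) (hC : ∀ n, |a n| ≤ C) : ℓ2 →L[ℂ] ℓ2 :=
  LinearMap.mkContinuous
    { toFun := fun x => (⟨fun n => (a n : ℂ) * x n, memD hC x⟩ : ℓ2)
      map_add' := fun x y => by
        apply lp.ext
        funext n
        simp only [lp.coeFn_add, Pi.add_apply]
        ring
      map_smul' := fun c x => by
        apply lp.ext
        funext n
        simp only [lp.coeFn_smul, Pi.smul_apply, RingHom.id_apply, smul_eq_mul]
        ring }
    C (fun x => diag_apply_norm_le a hC0 hC x _)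

@[simp] lemma diag_apply (a : ℕ → ℝ) {C : ℝ} (hC0 : 0 ≤ C) (hC : ∀ n, |a n| ≤ C)
    (x : ℓ2) (n : ℕ) : (diag a hC0 hC x : ∀ _, ℂ) n = (a n : ℂ) * x n := rfl

lemma diag_norm_apply_le (a : ℕ → ℝ) {C : ℝ} (hC0 : 0 ≤ C) (hC : ∀ n, |a n| ≤ C)
    (x : ℓ2) : ‖diag a hC0 hC x‖ ≤ C * ‖x‖ :=
  diag_apply_norm_le a hC0 hC x _

lemma diag_norm_ge (a : ℕ → ℝ) {C : ℝ} (hC0 : 0 ≤ C) (hC : ∀ n, |a n| ≤ C)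
    (k : ℕ) (c : ℝ) (hc0 : 0 ≤ c) (hck : ∀ n, n < k → c ≤ a n)
    (x : ℓ2) (hx : ∀ n, k ≤ n → (x : ∀ _, ℂ) n = 0) :
    c * ‖x‖ ≤ ‖diag a hC0 hC x‖ := by
  have h2 : (0:ℝ) < (2:ENNReal).toReal := by norm_num
  have hptw : ∀ n, c^2 * ‖(x : ∀ _, ℂ) n‖ ^ (2:ENNReal).toReal
      ≤ ‖(diag a hC0 hC x : ∀ _, ℂ) n‖ ^ (2:ENNReal).toReal := by
    intro n
    rw [rp2, rp2, diag_apply, nc, mul_pow]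
    rcases lt_or_ge n k with hn | hn
    · have : c ^ 2 ≤ |a n| ^ 2 :=
        pow_le_pow_left₀ hc0 ((hck n hn).trans (le_abs_self _)) 2
      exact mul_le_mul_of_nonneg_right this (by positivity)
    · rw [hx n hn]; simp
  have hsum1 : Summable fun n => c^2 * ‖(x : ∀ _, ℂ) n‖ ^ (2:ENNReal).toReal :=
    ((lp.memℓp x).summable h2).mul_left _
  have hsum2 : Summable fun n => ‖(diag a hC0 hC x : ∀ _, ℂ) n‖ ^ (2:ENNReal).toReal :=
    (lp.memℓp _).summable h2
  have hts := Summable.tsum_le_tsum hptw hsum1 hsum2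
  rw [tsum_mul_left] at hts
  rw [← lp.norm_rpow_eq_tsum h2, ← lp.norm_rpow_eq_tsum h2] at hts
  rw [rp2, rp2] at hts
  have h1 : (c * ‖x‖)^2 ≤ ‖diag a hC0 hC x‖^2 := by nlinarith
  nlinarith [norm_nonneg (diag a hC0 hC x), mul_nonneg hc0 (norm_nonneg x)]

lemma compact_of_finiteRank' {H₁ H₂ : Type*} [NormedAddCommGroup H₁] [NormedSpace ℂ H₁]
    [NormedAddCommGroup H₂] [NormedSpace ℂ H₂] (F : H₁ →L[ℂ] H₂)
    (h : FiniteDimensional ℂ (LinearMap.range (F : H₁ →ₗ[ℂ] H₂))) : IsCompactOperator F := by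
  rw [isCompactOperator_iff_exists_mem_nhds_image_subset_compact]
  refine ⟨Metric.closedBall 0 1, Metric.closedBall_mem_nhds 0 one_pos,
    Subtype.val '' (Metric.closedBall (0 : LinearMap.range (F : H₁ →ₗ[ℂ] H₂)) ‖F‖), ?_, ?_⟩
  · exact (ProperSpace.isCompact_closedBall _ _).image continuous_subtype_val
  · rintro y ⟨x, hx, rfl⟩
    refine ⟨⟨F x, LinearMap.mem_range_self _ x⟩, ?_, rfl⟩
    rw [Metric.mem_closedBall, dist_zero_right]
    have he : ‖(⟨F x, LinearMap.mem_range_self _ x⟩ : LinearMap.range (F : H₁ →ₗ[ℂ] H₂))‖ = ‖F x‖ := rfl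
    rw [he]
    calc ‖F x‖ ≤ ‖F‖ * ‖x‖ := F.le_opNorm x
      _ ≤ ‖F‖ * 1 := by
          have : ‖x‖ ≤ 1 := by rwa [Metric.mem_closedBall, dist_zero_right] at hx
          exact mul_le_mul_of_nonneg_left this (norm_nonneg F)
      _ = ‖F‖ := mul_one _

lemma weight_anti {v : ℕ → ℝ} (hv : IsWeight v) {i j : ℕ} (hi : 1 ≤ i) (hij : i ≤ j) :
    v j ≤ v i := by
  induction j, hij using Nat.le_induction with
  | base => exact le_rfl
  | succ n hn ih => exact (hv.1 n (hi.trans hn)).trans ih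

lemma key_exists {H₁ H₂ : Type*}
    [NormedAddCommGroup H₁] [InnerProductSpace ℂ H₁] [CompleteSpace H₁]
    [NormedAddCommGroup H₂] [InnerProductSpace ℂ H₂] [CompleteSpace H₂]
    (e₁ : H₁ ≃ₗᵢ[ℂ] ℓ2) (e₂ : H₂ ≃ₗᵢ[ℂ] ℓ2)
    (v : ℕ → ℝ) (hv : IsWeight v) :
    ∃ A : H₁ →L[ℂ] H₂, IsCompactOperator A ∧ (∀ k, 1 ≤ k → sNum k A ≤ v k) ∧
      (∀ k, 1 ≤ k → v k ≤ sNum k A) := by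
  classical
  have hv0 : ∀ k, 1 ≤ k → 0 ≤ v k := hv.2.1
  set a : ℕ → ℝ := fun n => v (n + 1) with ha
  have hv1 : 0 ≤ v 1 := hv0 1 le_rfl
  have hC : ∀ n, |a n| ≤ v 1 := by
    intro n
    rw [abs_of_nonneg (hv0 _ (Nat.le_add_left 1 n))]
    exact weight_anti hv le_rfl (Nat.le_add_left 1 n)
  set D : ℓ2 →L[ℂ] ℓ2 := diag a hv1 hC with hD
  -- truncations
  set tr : ℕ → ℕ → ℝ := fun m n => if n < m then a n else 0 with htr
  set tl : ℕ → ℕ → ℝ := fun m n => if n < m then 0 else a n with htl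
  have hCtr : ∀ m n, |tr m n| ≤ v 1 := by
    intro m n; by_cases h : n < m <;> simp [htr, h, abs_nonneg, hv1, hC n]
  have hCtl : ∀ m n, |tl m n| ≤ v (m + 1) := by
    intro m n
    by_cases h : n < m
    · simp [htl, h, hv0 (m+1) (Nat.le_add_left 1 m)]
    · push_neg at h
      simp only [htl, if_neg (not_lt.mpr h)]
      rw [abs_of_nonneg (hv0 _ (Nat.le_add_left 1 n))]
      exact weight_anti hv (Nat.le_add_left 1 m) (by omega)
  have hvm0 : ∀ m : ℕ, 0 ≤ v (m + 1) := fun m => hv0 _ (Nat.le_add_left 1 m)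
  set U₁ : H₁ →L[ℂ] ℓ2 := e₁.toLinearIsometry.toContinuousLinearMap with hU₁
  set V₂ : ℓ2 →L[ℂ] H₂ := e₂.symm.toLinearIsometry.toContinuousLinearMap with hV₂
  set A : H₁ →L[ℂ] H₂ := V₂.comp (D.comp U₁) with hAdef
  have hA : ∀ x : H₁, A x = e₂.symm (D (e₁ x)) := fun x => rfl
  set Fm : ℕ → (H₁ →L[ℂ] H₂) :=
    fun m => V₂.comp ((diag (tr m) hv1 (hCtr m)).comp U₁) with hFm
  have hFmx : ∀ m x, Fm m x = e₂.symm (diag (tr m) hv1 (hCtr m) (e₁ x)) := fun m x => rfl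
  -- A - Fm bound
  have hdiff : ∀ m (x : H₁), (A - Fm m) x = e₂.symm (diag (tl m) (hvm0 m) (hCtl m) (e₁ x)) := by
    intro m x
    rw [ContinuousLinearMap.sub_apply, hA, hFmx, ← map_sub]
    congr 1
    apply lp.ext
    funext n
    simp only [lp.coeFn_sub, Pi.sub_apply, hD, diag_apply]
    by_cases h : n < m <;> simp [htr, htl, h]
  have hAFm : ∀ m, ‖A - Fm m‖ ≤ v (m + 1) := by
    intro m
    refine ContinuousLinearMap.opNorm_le_bound _ (hvm0 m) fun x => ?_
    rw [hdiff m x, LinearIsometryEquiv.norm_map]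
    calc ‖diag (tl m) (hvm0 m) (hCtl m) (e₁ x)‖ ≤ v (m+1) * ‖e₁ x‖ :=
          diag_norm_apply_le _ _ _ _
      _ = v (m+1) * ‖x‖ := by rw [e₁.norm_map]
  -- rank of Fm
  have hrankFm : ∀ m, Module.rank ℂ (LinearMap.range (Fm m : H₁ →ₗ[ℂ] H₂)) ≤ (m : Cardinal) := by
    intro m
    set g₂ : Fin m → H₂ := fun i => e₂.symm (lp.single 2 (i : ℕ) 1) with hg₂
    have hle : LinearMap.range (Fm m : H₁ →ₗ[ℂ] H₂) ≤ span ℂ (Set.range g₂) := by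
      rintro _ ⟨x, rfl⟩
      rw [ContinuousLinearMap.coe_coe, hFmx]
      have hsum : diag (tr m) hv1 (hCtr m) (e₁ x)
          = ∑ i ∈ Finset.range m, ((tr m i : ℂ) * (e₁ x : ∀ _, ℂ) i) • lp.single 2 i (1:ℂ) := by
        apply lp.ext
        funext j
        rw [lp.coeFn_sum]
        simp only [diag_apply, Finset.sum_apply, lp.coeFn_smul, Pi.smul_apply, smul_eq_mul]
        rw [Finset.sum_eq_single j]
        · by_cases h : j < m
          · simp [htr, h, lp.single_apply_self]
          · simp [htr, h, lp.single_apply_self]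
        · intro b _ hbj
          rw [lp.single_apply_ne 2 b _ (Ne.symm hbj)]
          ring
        · intro hj
          rw [Finset.mem_range, not_lt] at hj
          simp [htr, not_lt.mpr hj]
      rw [hsum, map_sum]
      refine sum_mem fun i hi => ?_
      rw [map_smul]
      refine smul_mem _ _ (subset_span ?_)
      exact ⟨⟨i, Finset.mem_range.mp hi⟩, rfl⟩
    haveI : FiniteDimensional ℂ (span ℂ (Set.range g₂)) :=
      FiniteDimensional.span_of_finite ℂ (Set.finite_range _)
    calc Module.rank ℂ (LinearMap.range (Fm m : H₁ →ₗ[ℂ] H₂)) ≤ Module.rank ℂ (span ℂ (Set.range g₂)) :=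
          Submodule.rank_mono hle
      _ = (Module.finrank ℂ (span ℂ (Set.range g₂)) : Cardinal) :=
          (Module.finrank_eq_rank ℂ _).symm
      _ ≤ (m : Cardinal) := by
          have h := finrank_range_le_card (R := ℂ) g₂
          rw [Fintype.card_fin] at h
          exact_mod_cast h
  have hFDFm : ∀ m, FiniteDimensional ℂ (LinearMap.range (Fm m : H₁ →ₗ[ℂ] H₂)) := by
    intro m
    exact Module.rank_lt_aleph0_iff.mp ((hrankFm m).trans_lt (Cardinal.nat_lt_aleph0 m))
  -- compactness
  have hcomp : IsCompactOperator A := by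
    have htend0 : Tendsto (fun m => ‖Fm m - A‖) atTop (nhds 0) := by
      apply squeeze_zero (fun m => norm_nonneg _) (fun m => ?_)
        (hv.2.2.comp (tendsto_add_atTop_nat 1))
      rw [norm_sub_rev]
      exact hAFm m
    have htend : Tendsto Fm atTop (nhds A) := tendsto_iff_norm_sub_tendsto_zero.mpr htend0
    exact isCompactOperator_of_tendsto htend
      (Eventually.of_forall fun m => compact_of_finiteRank' _ (hFDFm m))
  refine ⟨A, hcomp, ?_, ?_⟩
  · -- upper bound
    intro k hk
    have hbdd : BddBelow {c : ℝ | ∃ F : H₁ →L[ℂ] H₂,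
        Module.rank ℂ (LinearMap.range (F : H₁ →ₗ[ℂ] H₂)) < (k : Cardinal) ∧ c = ‖A - F‖} := by
      refine ⟨0, ?_⟩
      rintro c ⟨F, _, rfl⟩
      exact norm_nonneg _
    have hmem : ‖A - Fm (k-1)‖ ∈ {c : ℝ | ∃ F : H₁ →L[ℂ] H₂,
        Module.rank ℂ (LinearMap.range (F : H₁ →ₗ[ℂ] H₂)) < (k : Cardinal) ∧ c = ‖A - F‖} := by
      refine ⟨Fm (k-1), ?_, rfl⟩
      refine (hrankFm (k-1)).trans_lt ?_
      exact_mod_cast Nat.sub_lt (by omega) one_pos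
    have h1 : sNum k A ≤ ‖A - Fm (k-1)‖ := csInf_le hbdd hmem
    have h2 := hAFm (k-1)
    have h3 : k - 1 + 1 = k := by omega
    rw [h3] at h2
    exact h1.trans h2
  · -- lower bound
    intro k hk
    have hne : ∃ c, c ∈ {c : ℝ | ∃ F : H₁ →L[ℂ] H₂,
        Module.rank ℂ (LinearMap.range (F : H₁ →ₗ[ℂ] H₂)) < (k : Cardinal) ∧ c = ‖A - F‖} := by
      refine ⟨‖A - 0‖, 0, ?_, rfl⟩
      have h0 : LinearMap.range ((0 : H₁ →L[ℂ] H₂) : H₁ →ₗ[ℂ] H₂) = ⊥ := LinearMap.range_zero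
      rw [h0, rank_bot]
      exact_mod_cast Nat.pos_of_ne_zero (by omega)
    refine le_csInf hne ?_
    rintro c ⟨F, hFr, rfl⟩
    -- build the k-dimensional test space
    set g₁ : Fin k → H₁ := fun i => e₁.symm (lp.single 2 (i : ℕ) 1) with hg₁
    have hone : Orthonormal ℂ (fun n : ℕ => lp.single 2 n (1:ℂ)) := by
      rw [orthonormal_iff_ite]
      intro i j
      rw [lp.inner_single_left]
      by_cases h : i = j
      · subst h; simp [lp.single_apply_self, RCLike.inner_apply]
      · rw [lp.single_apply_ne 2 j _ (h)]
        simp [RCLike.inner_apply, h]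
    have horthg : Orthonormal ℂ g₁ := by
      rw [orthonormal_iff_ite]
      intro i j
      rw [hg₁]
      simp only []
      rw [LinearIsometryEquiv.inner_map_map]
      rw [orthonormal_iff_ite.mp hone (i : ℕ) (j : ℕ)]
      simp [Fin.val_inj]
    set S : Submodule ℂ H₁ := span ℂ (Set.range g₁) with hS
    haveI hSfd : FiniteDimensional ℂ S := FiniteDimensional.span_of_finite ℂ (Set.finite_range _)
    have hSrank : Module.finrank ℂ S = k := by
      rw [hS, finrank_span_eq_card horthg.linearIndependent, Fintype.card_fin]
    haveI hFD : FiniteDimensional ℂ (LinearMap.range (F : H₁ →ₗ[ℂ] H₂)) :=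
      Module.rank_lt_aleph0_iff.mp (hFr.trans (Cardinal.nat_lt_aleph0 k))
    have hfr : Module.finrank ℂ (LinearMap.range (F : H₁ →ₗ[ℂ] H₂)) < k := by
      have heq := Module.finrank_eq_rank ℂ (LinearMap.range (F : H₁ →ₗ[ℂ] H₂))
      rw [← heq] at hFr
      exact_mod_cast hFr
    set F' : S →ₗ[ℂ] H₂ := (F : H₁ →ₗ[ℂ] H₂).domRestrict S with hF'
    have hle : LinearMap.range F' ≤ LinearMap.range (F : H₁ →ₗ[ℂ] H₂) := by
      rintro _ ⟨x, rfl⟩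
      exact ⟨(x : H₁), rfl⟩
    have hfr' : Module.finrank ℂ (LinearMap.range F') < k :=
      (Submodule.finrank_mono hle).trans_lt hfr
    have hkerpos : 0 < Module.finrank ℂ (LinearMap.ker F') := by
      have hrk := LinearMap.finrank_range_add_finrank_ker F'
      rw [hSrank] at hrk
      omega
    have hkerne : LinearMap.ker F' ≠ ⊥ := by
      intro h
      rw [h, finrank_bot] at hkerpos
      omega
    obtain ⟨x, hxker, hx0⟩ := (Submodule.ne_bot_iff _).mp hkerne
    set x' : H₁ := (x : H₁) with hx'
    have hx'0 : x' ≠ 0 := fun h => hx0 (Submodule.coe_eq_zero.mp h)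
    have hFx' : F x' = 0 := hxker
    have hx'S : x' ∈ S := x.2
    -- coordinates of e₁ x' vanish above k
    have hy : e₁ x' ∈ span ℂ (⇑(e₁.toLinearEquiv.toLinearMap) '' Set.range g₁) :=
      Submodule.apply_mem_span_image_of_mem_span _ hx'S
    have himg : (⇑(e₁.toLinearEquiv.toLinearMap) '' Set.range g₁)
        = Set.range (fun i : Fin k => lp.single 2 (i : ℕ) (1:ℂ)) := by
      rw [← Set.range_comp]
      refine congrArg Set.range (funext fun i => ?_)
      simp [hg₁]
    rw [himg] at hy
    have hcoord' : ∀ y : ℓ2,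
        y ∈ span ℂ (Set.range (fun i : Fin k => lp.single 2 (i : ℕ) (1:ℂ))) →
        ∀ n, k ≤ n → (y : ∀ _, ℂ) n = 0 := by
      intro y hy
      induction hy using Submodule.span_induction with
      | mem z hz =>
        intro n hn
        obtain ⟨i, rfl⟩ := hz
        exact lp.single_apply_ne 2 (i : ℕ) _ (by omega)
      | zero => intro n hn; simp
      | add y z _ _ hy hz =>
        intro n hn
        rw [lp.coeFn_add, Pi.add_apply, hy n hn, hz n hn, add_zero]
      | smul c y _ hy =>
        intro n hn
        rw [lp.coeFn_smul, Pi.smul_apply, hy n hn, smul_zero]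
    have hcoord := hcoord' (e₁ x') hy
    -- lower norm estimate
    have hck : ∀ n, n < k → v k ≤ a n := by
      intro n hn
      exact weight_anti hv (by omega) (by omega)
    have hlow : v k * ‖e₁ x'‖ ≤ ‖D (e₁ x')‖ := by
      rw [hD]
      exact diag_norm_ge a hv1 hC k (v k) (hv0 k hk) hck (e₁ x') hcoord
    have hnorm : ‖e₁ x'‖ = ‖x'‖ := e₁.norm_map x'
    have hAx : ‖A x'‖ = ‖D (e₁ x')‖ := by rw [hA]; exact e₂.symm.norm_map _
    have hxpos : 0 < ‖x'‖ := norm_pos_iff.mpr hx'0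
    have hchain : v k * ‖x'‖ ≤ ‖A - F‖ * ‖x'‖ := by
      calc v k * ‖x'‖ = v k * ‖e₁ x'‖ := by rw [hnorm]
        _ ≤ ‖D (e₁ x')‖ := hlow
        _ = ‖A x'‖ := hAx.symm
        _ = ‖(A - F) x'‖ := by rw [ContinuousLinearMap.sub_apply, hFx', sub_zero]
        _ ≤ ‖A - F‖ * ‖x'‖ := (A - F).le_opNorm x'
    exact le_of_mul_le_mul_right hchain hxpos

end AuxStmt0

variable {H₁ H₂ H₃ H₄ : Type*}
  [NormedAddCommGroup H₁] [InnerProductSpace ℂ H₁] [CompleteSpace H₁]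
    [TopologicalSpace.SeparableSpace H₁]
  [NormedAddCommGroup H₂] [InnerProductSpace ℂ H₂] [CompleteSpace H₂]
    [TopologicalSpace.SeparableSpace H₂]
  [NormedAddCommGroup H₃] [InnerProductSpace ℂ H₃] [CompleteSpace H₃]
    [TopologicalSpace.SeparableSpace H₃]
  [NormedAddCommGroup H₄] [InnerProductSpace ℂ H₄] [CompleteSpace H₄]
    [TopologicalSpace.SeparableSpace H₄]

/-- For infinite-dimensional separable Hilbert spaces,
`E_v ⊆ E_w` iff `v_k ≤ M·w_k` for all `k ≥ 1` and some `M ≥ 0`. -/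
theorem stmt_0
    (hinf₁ : ¬ FiniteDimensional ℂ H₁) (hinf₂ : ¬ FiniteDimensional ℂ H₂)
    (v w : ℕ → ℝ) (hv : IsWeight v) (hw : IsWeight w) :
    (∀ A : H₁ →L[ℂ] H₂, MemE v A → MemE w A) ↔
      ∃ M : ℝ, 0 ≤ M ∧ ∀ k, 1 ≤ k → v k ≤ M * w k := by
  constructor
  · intro h
    obtain ⟨b₁⟩ := exists_hb H₁ hinf₁
    obtain ⟨b₂⟩ := exists_hb H₂ hinf₂
    obtain ⟨A, hAc, hup, hlo⟩ := key_exists b₁.repr b₂.repr v hv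
    have hAv : MemE v A := ⟨hAc, 1, zero_le_one, fun k hk => by
      rw [one_mul]; exact hup k hk⟩
    obtain ⟨-, M, hM0, hM⟩ := h A hAv
    exact ⟨M, hM0, fun k hk => (hlo k hk).trans (hM k hk)⟩
  · rintro ⟨M, hM0, hMk⟩ A ⟨hAc, M', hM'0, hM'⟩
    refine ⟨hAc, M' * M, mul_nonneg hM'0 hM0, fun k hk => ?_⟩
    calc sNum k A ≤ M' * v k := hM' k hk
      _ ≤ M' * (M * w k) := mul_le_mul_of_nonneg_left (hMk k hk) hM'0
      _ = M' * M * w k := (mul_assoc _ _ _).symm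

end
end

section
/- Let w be a weight sequence such that there exists M ≥ 1 with ẇ_k ≤ M·w_k for all k ≥ 1 (so ẇ ≍ w), and let H₁, H₂ be separable complex Hilbert spaces. Then E_w(H₁,H₂) is complete with respect to the quasi-norm |·|_w: every sequence (A_n) in E_w(H₁,H₂) that is Cauchy with respect to |·|_w converges in |·|_w to some A ∈ E_w(H₁,H₂). -/
open Filter Topology

noncomputable section

variable {H₁ H₂ H₃ H₄ : Type*}
  [NormedAddCommGroup H₁] [InnerProductSpace ℂ H₁] [CompleteSpace H₁]
    [TopologicalSpace.SeparableSpace H₁]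
  [NormedAddCommGroup H₂] [InnerProductSpace ℂ H₂] [CompleteSpace H₂]
    [TopologicalSpace.SeparableSpace H₂]
  [NormedAddCommGroup H₃] [InnerProductSpace ℂ H₃] [CompleteSpace H₃]
    [TopologicalSpace.SeparableSpace H₃]
  [NormedAddCommGroup H₄] [InnerProductSpace ℂ H₄] [CompleteSpace H₄]
    [TopologicalSpace.SeparableSpace H₄]

section AuxLemmas

lemma rangeL_coe {H₁ H₂ : Type*} [NormedAddCommGroup H₁] [NormedSpace ℂ H₁]
    [NormedAddCommGroup H₂] [NormedSpace ℂ H₂] (F : H₁ →L[ℂ] H₂) :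
    LinearMap.range (F : H₁ →ₗ[ℂ] H₂) = LinearMap.range (F : H₁ →ₗ[ℂ] H₂) := by
  ext x; simp [LinearMap.mem_range]

variable {H₁ H₂ : Type*} [NormedAddCommGroup H₁] [NormedSpace ℂ H₁]
    [NormedAddCommGroup H₂] [NormedSpace ℂ H₂]

lemma sNum_set_nonempty (k : ℕ) (hk : 1 ≤ k) (A : H₁ →L[ℂ] H₂) :
    {c : ℝ | ∃ F : H₁ →L[ℂ] H₂,
      Module.rank ℂ (LinearMap.range (F : H₁ →ₗ[ℂ] H₂)) < (k : Cardinal) ∧ c = ‖A - F‖}.Nonempty := by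
  refine ⟨‖A‖, 0, ?_, by simp⟩
  rw [rangeL_coe, show ((0 : H₁ →L[ℂ] H₂) : H₁ →ₗ[ℂ] H₂) = 0 from rfl,
    LinearMap.range_zero, rank_bot]
  exact_mod_cast Nat.cast_pos.mpr hk

lemma sNum_set_bddBelow (k : ℕ) (A : H₁ →L[ℂ] H₂) :
    BddBelow {c : ℝ | ∃ F : H₁ →L[ℂ] H₂,
      Module.rank ℂ (LinearMap.range (F : H₁ →ₗ[ℂ] H₂)) < (k : Cardinal) ∧ c = ‖A - F‖} := by
  refine ⟨0, fun c hc => ?_⟩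
  obtain ⟨F, _, rfl⟩ := hc
  exact norm_nonneg _

lemma sNum_nonneg (k : ℕ) (A : H₁ →L[ℂ] H₂) : 0 ≤ sNum k A := by
  rcases Nat.eq_zero_or_pos k with rfl | hk
  · rw [sNum]
    have : {c : ℝ | ∃ F : H₁ →L[ℂ] H₂,
      Module.rank ℂ (LinearMap.range (F : H₁ →ₗ[ℂ] H₂)) < ((0:ℕ) : Cardinal) ∧ c = ‖A - F‖} = ∅ := by
      ext c; simp
    rw [this, Real.sInf_empty]
  · exact le_csInf (sNum_set_nonempty k hk A) (fun c hc => by obtain ⟨F, _, rfl⟩ := hc; exact norm_nonneg _)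

lemma sNum_one (A : H₁ →L[ℂ] H₂) : sNum 1 A = ‖A‖ := by
  rw [sNum]
  have : {c : ℝ | ∃ F : H₁ →L[ℂ] H₂,
      Module.rank ℂ (LinearMap.range (F : H₁ →ₗ[ℂ] H₂)) < ((1:ℕ) : Cardinal) ∧ c = ‖A - F‖} = {‖A‖} := by
    ext c
    constructor
    · rintro ⟨F, hF, rfl⟩
      rw [rangeL_coe] at hF
      have h0 : Module.rank ℂ (LinearMap.range (F : H₁ →ₗ[ℂ] H₂)) = 0 :=
        Cardinal.lt_one_iff_zero.mp (by exact_mod_cast hF)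
      have hbot : LinearMap.range (F : H₁ →ₗ[ℂ] H₂) = ⊥ :=
        Submodule.rank_eq_zero.mp h0
      have hco : (F : H₁ →ₗ[ℂ] H₂) = 0 := LinearMap.range_eq_bot.mp hbot
      have hF0 : F = 0 := by
        ext x
        exact LinearMap.congr_fun hco x
      simp [hF0]
    · rintro rfl
      refine ⟨0, ?_, by simp⟩
      rw [rangeL_coe, show ((0 : H₁ →L[ℂ] H₂) : H₁ →ₗ[ℂ] H₂) = 0 from rfl,
        LinearMap.range_zero, rank_bot]
      exact_mod_cast Nat.one_pos
  rw [this, csInf_singleton]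

lemma sNum_antitone {k l : ℕ} (hk : 1 ≤ k) (hkl : k ≤ l) (A : H₁ →L[ℂ] H₂) :
    sNum l A ≤ sNum k A := by
  apply csInf_le_csInf (sNum_set_bddBelow l A) (sNum_set_nonempty k hk A)
  rintro c ⟨F, hF, rfl⟩
  exact ⟨F, lt_of_lt_of_le hF (by exact_mod_cast hkl), rfl⟩

lemma sNum_neg (k : ℕ) (A : H₁ →L[ℂ] H₂) : sNum k (-A) = sNum k A := by
  have key : ∀ B : H₁ →L[ℂ] H₂, ∀ c, (∃ F : H₁ →L[ℂ] H₂,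
      Module.rank ℂ (LinearMap.range (F : H₁ →ₗ[ℂ] H₂)) < (k : Cardinal) ∧ c = ‖-B - F‖) →
      (∃ F : H₁ →L[ℂ] H₂, Module.rank ℂ (LinearMap.range (F : H₁ →ₗ[ℂ] H₂)) < (k : Cardinal) ∧ c = ‖B - F‖) := by
    rintro B c ⟨F, hF, rfl⟩
    refine ⟨-F, ?_, ?_⟩
    · rw [rangeL_coe, ContinuousLinearMap.coe_neg, LinearMap.range_neg, ← rangeL_coe]
      exact hF
    · rw [show -B - F = -(B - -F) by abel, norm_neg]
  unfold sNum
  congr 1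
  ext c
  exact ⟨key A c, fun h => by simpa using key (-A) c (by simpa using h)⟩

lemma sNum_add_le {j k : ℕ} (hj : 1 ≤ j) (hk : 1 ≤ k) (A B : H₁ →L[ℂ] H₂) :
    sNum (j + k - 1) (A + B) ≤ sNum j A + sNum k B := by
  have hb := sNum_set_bddBelow (j + k - 1) (A + B)
  -- show for all c in set_j A, d in set_k B : sNum (j+k-1) (A+B) ≤ c + d
  have key : ∀ c ∈ {c : ℝ | ∃ F : H₁ →L[ℂ] H₂,
        Module.rank ℂ (LinearMap.range (F : H₁ →ₗ[ℂ] H₂)) < (j : Cardinal) ∧ c = ‖A - F‖},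
      ∀ d ∈ {c : ℝ | ∃ F : H₁ →L[ℂ] H₂,
        Module.rank ℂ (LinearMap.range (F : H₁ →ₗ[ℂ] H₂)) < (k : Cardinal) ∧ c = ‖B - F‖},
      sNum (j + k - 1) (A + B) ≤ c + d := by
    rintro c ⟨F, hF, rfl⟩ d ⟨G, hG, rfl⟩
    have hrank : Module.rank ℂ (LinearMap.range ((F + G : H₁ →L[ℂ] H₂) : H₁ →ₗ[ℂ] H₂)) <
        ((j + k - 1 : ℕ) : Cardinal) := by
      rw [rangeL_coe] at hF hG ⊢
      have h1 : Module.rank ℂ (LinearMap.range ((F + G : H₁ →L[ℂ] H₂) : H₁ →ₗ[ℂ] H₂)) ≤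
          Module.rank ℂ (LinearMap.range (F : H₁ →ₗ[ℂ] H₂)) +
          Module.rank ℂ (LinearMap.range (G : H₁ →ₗ[ℂ] H₂)) := by
        rw [ContinuousLinearMap.coe_add]
        exact LinearMap.rank_add_le _ _
      obtain ⟨nf, hnf⟩ := Cardinal.lt_aleph0.mp (lt_of_lt_of_le hF (le_of_lt (Cardinal.nat_lt_aleph0 j)))
      obtain ⟨ng, hng⟩ := Cardinal.lt_aleph0.mp (lt_of_lt_of_le hG (le_of_lt (Cardinal.nat_lt_aleph0 k)))
      rw [hnf] at hF h1; rw [hng] at hG h1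
      have hnf' : nf < j := by exact_mod_cast hF
      have hng' : ng < k := by exact_mod_cast hG
      calc Module.rank ℂ (LinearMap.range ((F + G : H₁ →L[ℂ] H₂) : H₁ →ₗ[ℂ] H₂))
          ≤ ((nf + ng : ℕ) : Cardinal) := by rw [Nat.cast_add]; exact h1
        _ < ((j + k - 1 : ℕ) : Cardinal) := by exact_mod_cast (by omega : nf + ng < j + k - 1)
    have hmem : ‖(A + B) - (F + G)‖ ∈ {c : ℝ | ∃ F' : H₁ →L[ℂ] H₂,
        Module.rank ℂ (LinearMap.range (F' : H₁ →ₗ[ℂ] H₂)) < ((j + k - 1 : ℕ) : Cardinal) ∧ c = ‖(A + B) - F'‖} :=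
      ⟨F + G, hrank, rfl⟩
    calc sNum (j + k - 1) (A + B) ≤ ‖(A + B) - (F + G)‖ := csInf_le hb hmem
      _ ≤ ‖A - F‖ + ‖B - G‖ := by
          rw [show (A + B) - (F + G) = (A - F) + (B - G) by abel]
          exact norm_add_le _ _
  -- now two nested infs
  rw [show sNum j A + sNum k B = sNum j A + sNum k B from rfl]
  have h1 : ∀ d ∈ {c : ℝ | ∃ F : H₁ →L[ℂ] H₂,
        Module.rank ℂ (LinearMap.range (F : H₁ →ₗ[ℂ] H₂)) < (k : Cardinal) ∧ c = ‖B - F‖},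
      sNum (j + k - 1) (A + B) - d ≤ sNum j A := by
    intro d hd
    apply le_csInf (sNum_set_nonempty j hj A)
    intro c hc
    linarith [key c hc d hd]
  have h2 : sNum (j + k - 1) (A + B) - sNum j A ≤ sNum k B := by
    apply le_csInf (sNum_set_nonempty k hk B)
    intro d hd
    linarith [h1 d hd]
  linarith

lemma sNum_le_sNum_add_norm (k : ℕ) (hk : 1 ≤ k) (A B : H₁ →L[ℂ] H₂) :
    sNum k A ≤ sNum k B + ‖A - B‖ := by
  have := sNum_add_le (j := 1) (k := k) le_rfl hk (A - B) B
  simpa [sNum_one, add_comm] using this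


end AuxLemmas

/-- if `ẇ ≍ w` then `E_w` is complete with respect to `|·|_w`. -/
theorem stmt_5 (w : ℕ → ℝ) (hw : IsWeight w)
    (M : ℝ) (hM : 1 ≤ M) (hdbl : ∀ k, 1 ≤ k → dbl w k ≤ M * w k)
    (A : ℕ → (H₁ →L[ℂ] H₂)) (hmem : ∀ n, MemE w (A n))
    (hcauchy : ∀ ε : ℝ, 0 < ε → ∃ N : ℕ, ∀ m, N ≤ m → ∀ n, N ≤ n →
      gaugeE w (A m - A n) ≤ ε) :
    ∃ L : H₁ →L[ℂ] H₂, MemE w L ∧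
      ∀ ε : ℝ, 0 < ε → ∃ N : ℕ, ∀ n, N ≤ n → gaugeE w (A n - L) ≤ ε := by
  obtain ⟨hw1, hw2, hw3⟩ := hw
  -- Lemma B : from bounds at odd indices to bounds at all indices (doubling)
  have hB : ∀ (B : H₁ →L[ℂ] H₂) (c : ℝ), 0 ≤ c →
      (∀ k, 1 ≤ k → sNum (k + k - 1) B ≤ c * w k) →
      ∀ j, 1 ≤ j → sNum j B ≤ c * M * w j := by
    intro B c hc h j hj
    set k := (j + 1) / 2 with hkdef
    have hk1 : 1 ≤ k := by omega
    have hkj : k + k - 1 ≤ j := by omega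
    have h1 : sNum j B ≤ sNum (k + k - 1) B := sNum_antitone (by omega) hkj B
    have h2 : sNum (k + k - 1) B ≤ c * w k := h k hk1
    have h3 : w k = dbl w j := rfl
    have h4 : c * w k ≤ c * (M * w j) := by
      apply mul_le_mul_of_nonneg_left _ hc
      rw [h3]; exact hdbl j hj
    calc sNum j B ≤ c * w k := h1.trans h2
      _ ≤ c * (M * w j) := h4
      _ = c * M * w j := by ring
  -- gauge sets
  have hSbdd : ∀ B : H₁ →L[ℂ] H₂,
      BddBelow {M' : ℝ | 0 ≤ M' ∧ ∀ k, 1 ≤ k → sNum k B ≤ M' * w k} :=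
    fun B => ⟨0, fun x hx => hx.1⟩
  -- Lemma A : gauge bound when the gauge set is nonempty
  have hA : ∀ B : H₁ →L[ℂ] H₂,
      (∃ c, 0 ≤ c ∧ ∀ k, 1 ≤ k → sNum k B ≤ c * w k) →
      ∀ k, 1 ≤ k → sNum k B ≤ gaugeE w B * w k := by
    intro B hne k hk
    obtain ⟨c, hc0, hc⟩ := hne
    have hne' : {M' : ℝ | 0 ≤ M' ∧ ∀ k, 1 ≤ k → sNum k B ≤ M' * w k}.Nonempty := ⟨c, hc0, hc⟩
    have hg0 : 0 ≤ gaugeE w B := le_csInf hne' (fun x hx => hx.1)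
    rcases eq_or_lt_of_le (hw2 k hk) with hwk | hwk
    · have : sNum k B ≤ 0 := by
        have := hc k hk; rw [← hwk] at this; simpa using this
      calc sNum k B ≤ 0 := this
        _ ≤ gaugeE w B * w k := mul_nonneg hg0 (hw2 k hk)
    · rw [← div_le_iff₀ hwk] at *
      apply le_csInf hne'
      intro x hx
      rw [div_le_iff₀ hwk]
      exact hx.2 k hk
  -- gauge ≤ ε from the pointwise bound
  have hGle : ∀ (B : H₁ →L[ℂ] H₂) (ε : ℝ), 0 ≤ ε →
      (∀ k, 1 ≤ k → sNum k B ≤ ε * w k) → gaugeE w B ≤ ε := by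
    intro B ε hε h
    exact csInf_le (hSbdd B) ⟨hε, h⟩
  -- differences lie in the class
  have hSdiff : ∀ m n : ℕ, ∃ c, 0 ≤ c ∧ ∀ k, 1 ≤ k → sNum k (A m - A n) ≤ c * w k := by
    intro m n
    obtain ⟨-, Mm, hMm0, hMm⟩ := hmem m
    obtain ⟨-, Mn, hMn0, hMn⟩ := hmem n
    refine ⟨(Mm + Mn) * M, mul_nonneg (by linarith) (by linarith), ?_⟩
    apply hB _ _ (by linarith)
    intro k hk
    have h1 : sNum (k + k - 1) (A m + -(A n)) ≤ sNum k (A m) + sNum k (-(A n)) :=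
      sNum_add_le hk hk _ _
    rw [sNum_neg] at h1
    calc sNum (k + k - 1) (A m - A n) = sNum (k + k - 1) (A m + -(A n)) := by
          rw [sub_eq_add_neg]
      _ ≤ sNum k (A m) + sNum k (A n) := h1
      _ ≤ Mm * w k + Mn * w k := add_le_add (hMm k hk) (hMn k hk)
      _ = (Mm + Mn) * w k := by ring
  -- pointwise Cauchy estimate
  have hPC : ∀ ε : ℝ, 0 < ε → ∃ N : ℕ, ∀ m, N ≤ m → ∀ n, N ≤ n →
      ∀ k, 1 ≤ k → sNum k (A m - A n) ≤ ε * w k := by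
    intro ε hε
    obtain ⟨N, hN⟩ := hcauchy ε hε
    refine ⟨N, fun m hm n hn k hk => ?_⟩
    calc sNum k (A m - A n) ≤ gaugeE w (A m - A n) * w k := hA _ (hSdiff m n) k hk
      _ ≤ ε * w k := mul_le_mul_of_nonneg_right (hN m hm n hn) (hw2 k hk)
  -- A is Cauchy in operator norm
  have hw10 : 0 ≤ w 1 := hw2 1 le_rfl
  have hCS : CauchySeq A := by
    rw [Metric.cauchySeq_iff]
    intro ε hε
    have hδ : (0:ℝ) < ε / (2 * (w 1 + 1)) := by positivity
    obtain ⟨N, hN⟩ := hPC _ hδ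
    refine ⟨N, fun m hm n hn => ?_⟩
    have h1 : sNum 1 (A m - A n) ≤ (ε / (2 * (w 1 + 1))) * w 1 := hN m hm n hn 1 le_rfl
    rw [sNum_one] at h1
    rw [dist_eq_norm]
    have h2 : (ε / (2 * (w 1 + 1))) * w 1 < ε := by
      rw [div_mul_eq_mul_div, div_lt_iff₀ (by positivity)]
      nlinarith
    linarith
  obtain ⟨L, hL⟩ := cauchySeq_tendsto_of_complete hCS
  -- main convergence estimate
  have hconv : ∀ ε : ℝ, 0 < ε → ∃ N : ℕ, ∀ n, N ≤ n →
      ∀ k, 1 ≤ k → sNum k (A n - L) ≤ ε * w k := by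
    intro ε hε
    obtain ⟨N, hN⟩ := hPC ε hε
    refine ⟨N, fun n hn k hk => ?_⟩
    apply le_of_forall_pos_le_add
    intro δ hδ
    obtain ⟨N', hN'⟩ := Metric.tendsto_atTop.mp hL δ hδ
    set m := max N N' with hm
    have hmN : N ≤ m := le_max_left _ _
    have hdist : ‖A m - L‖ < δ := by
      have := hN' m (le_max_right _ _)
      rwa [dist_eq_norm] at this
    have h1 : sNum k (A n - L) ≤ sNum k (A n - A m) + ‖(A n - L) - (A n - A m)‖ :=
      sNum_le_sNum_add_norm k hk _ _
    have h2 : (A n - L) - (A n - A m) = A m - L := by abel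
    rw [h2] at h1
    have h3 : sNum k (A n - A m) ≤ ε * w k := hN n hn m hmN k hk
    linarith
  refine ⟨L, ⟨?_, ?_⟩, ?_⟩
  · -- compactness
    have hcl : IsClosed { f : H₁ →L[ℂ] H₂ | IsCompactOperator f } :=
      isClosed_setOf_isCompactOperator
    exact hcl.mem_of_tendsto hL (Filter.Eventually.of_forall fun n => (hmem n).1)
  · -- the gauge bound for L
    obtain ⟨N₁, hN₁⟩ := hconv 1 one_pos
    obtain ⟨-, M₀, hM₀0, hM₀⟩ := hmem N₁
    refine ⟨(M₀ + 1) * M, mul_nonneg (by linarith) (by linarith), ?_⟩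
    apply hB _ _ (by linarith)
    intro k hk
    have h1 : sNum (k + k - 1) (A N₁ + -(A N₁ - L)) ≤
        sNum k (A N₁) + sNum k (-(A N₁ - L)) := sNum_add_le hk hk _ _
    rw [sNum_neg] at h1
    have h2 : A N₁ + -(A N₁ - L) = L := by abel
    rw [h2] at h1
    calc sNum (k + k - 1) L ≤ sNum k (A N₁) + sNum k (A N₁ - L) := h1
      _ ≤ M₀ * w k + 1 * w k := add_le_add (hM₀ k hk) (hN₁ N₁ le_rfl k hk)
      _ = (M₀ + 1) * w k := by ring
  · -- convergence in gauge
    intro ε hε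
    obtain ⟨N, hN⟩ := hconv ε hε
    exact ⟨N, fun n hn => hGle _ ε hε.le (hN n hn)⟩

end
end

section
/- Let w be a weight sequence, H a separable complex Hilbert space, and A ∈ E_w(H) a quasi-nilpotent compact operator. Suppose C > 0 is a constant such that ‖A^{2k}‖ ≤ C^{2k}·(s_1(A)⋯s_k(A))² for every k ≥ 1. Then I − A is invertible and ‖(I−A)^{-1}‖ ≤ F_w(|A|_w), where F_w(r) = (1 + r·w_1)·(1 + Σ_{k=1}^∞ (w_1⋯w_k)²·(Cr)^{2k}). -/
open Filter Topology

noncomputable section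

variable {H : Type*} [NormedAddCommGroup H] [InnerProductSpace ℂ H] [CompleteSpace H]
  [TopologicalSpace.SeparableSpace H]

/-- resolvent bound at `z = 1` for a quasi-nilpotent `A ∈ E_w(H)`. -/
theorem stmt_7 (w : ℕ → ℝ) (hw : IsWeight w)
    (A : H →L[ℂ] H) (hA : MemE w A) (hqn : spectrum ℂ A = {0})
    (C : ℝ) (hC : 0 < C)
    (hDos : ∀ k, 1 ≤ k →
      ‖A ^ (2 * k)‖ ≤ C ^ (2 * k) * (∏ n ∈ Finset.Icc 1 k, sNum n A) ^ 2) :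
    IsUnit ((1 : H →L[ℂ] H) - A) ∧
      ‖Ring.inverse ((1 : H →L[ℂ] H) - A)‖ ≤ Fw C w (gaugeE w A) := by
  classical
  obtain ⟨hcpt, M0, hM0, hM0le⟩ := hA
  set r := gaugeE w A with hrdef
  have hSne : Set.Nonempty {M : ℝ | 0 ≤ M ∧ ∀ k, 1 ≤ k → sNum k A ≤ M * w k} :=
    ⟨M0, hM0, hM0le⟩
  have hr0 : 0 ≤ r := Real.sInf_nonneg (fun x hx => hx.1)
  have hw1 : 0 ≤ w 1 := hw.2.1 1 le_rfl
  have hs_le : ∀ k, 1 ≤ k → sNum k A ≤ r * w k := by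
    intro k hk
    rcases eq_or_lt_of_le (hw.2.1 k hk) with h0 | hpos
    · have h := hM0le k hk
      rw [← h0] at h ⊢
      simpa using h
    · have hlb : sNum k A / w k ≤ r :=
        le_csInf hSne (fun M hM => (div_le_iff₀ hpos).2 (hM.2 k hk))
      exact (div_le_iff₀ hpos).1 hlb
  have hs_nonneg : ∀ k, 0 ≤ sNum k A := fun k =>
    Real.sInf_nonneg (by rintro x ⟨F, -, rfl⟩; exact norm_nonneg _)
  have hrank0 : (Module.rank ℂ (LinearMap.range ((0 : H →L[ℂ] H) : H →ₗ[ℂ] H))) < 1 := by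
    rw [show ((0 : H →L[ℂ] H) : H →ₗ[ℂ] H) = 0 from rfl, LinearMap.range_zero]
    simpa [rank_bot] using (zero_lt_one : (0 : Cardinal) < 1)
  have hnormA : ‖A‖ ≤ r * w 1 := by
    refine le_trans ?_ (hs_le 1 le_rfl)
    refine le_csInf ⟨‖A‖, (0 : H →L[ℂ] H), hrank0, by simp⟩ ?_
    rintro x ⟨F, hF, rfl⟩
    have h0 : Module.rank ℂ (LinearMap.range (F : H →ₗ[ℂ] H)) = 0 :=
      Cardinal.lt_one_iff_zero.1 hF
    have hF0 : (F : H →ₗ[ℂ] H) = 0 := LinearMap.range_eq_bot.1 (Submodule.rank_eq_zero.1 h0)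
    have : F = 0 := ContinuousLinearMap.coe_injective (by rw [hF0]; rfl)
    simp [this]
  set b : ℕ → ℝ := fun k => (∏ n ∈ Finset.Icc 1 k, w n) ^ 2 * (C * r) ^ (2 * k) with hbdef
  have hb_nonneg : ∀ k, 0 ≤ b k := fun k =>
    mul_nonneg (sq_nonneg _) ((even_two_mul k).pow_nonneg _)
  have hb_succ : ∀ k, b (k + 1) = b k * (w (k + 1) * (C * r)) ^ 2 := by
    intro k
    simp only [hbdef]
    rw [Finset.prod_Icc_succ_top (Nat.le_add_left 1 k)]
    ring
  have hb_sum : Summable b := by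
    apply summable_of_ratio_norm_eventually_le (r := 1 / 2) (by norm_num)
    have h0 : Filter.Tendsto (fun k => (w (k + 1) * (C * r)) ^ 2) Filter.atTop (nhds 0) := by
      have h1 : Filter.Tendsto (fun k => w (k + 1) * (C * r)) Filter.atTop (nhds (0 * (C * r))) :=
        (hw.2.2.comp (Filter.tendsto_add_atTop_nat 1)).mul_const (C * r)
      rw [zero_mul] at h1
      simpa using h1.pow 2
    have hev : ∀ᶠ k in Filter.atTop, (w (k + 1) * (C * r)) ^ 2 ≤ 1 / 2 :=
      h0.eventually (eventually_le_nhds (by norm_num))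
    filter_upwards [hev] with k hk
    rw [hb_succ k, Real.norm_eq_abs, Real.norm_eq_abs,
      abs_of_nonneg (hb_nonneg _), abs_of_nonneg (by positivity)]
    calc b k * (w (k + 1) * (C * r)) ^ 2 ≤ b k * (1 / 2) :=
          mul_le_mul_of_nonneg_left hk (hb_nonneg k)
      _ = 1 / 2 * b k := by ring
  have ha_le : ∀ k, ‖(A ^ 2) ^ k‖ ≤ b k := by
    intro k
    rcases Nat.eq_zero_or_pos k with rfl | hk
    · have : b 0 = 1 := by norm_num [hbdef]
      rw [this, pow_zero]
      simpa [ContinuousLinearMap.one_def] using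
        (ContinuousLinearMap.norm_id_le : ‖ContinuousLinearMap.id ℂ H‖ ≤ 1)
    · rw [← pow_mul]
      refine (hDos k hk).trans ?_
      have hprod : ∏ n ∈ Finset.Icc 1 k, sNum n A ≤ ∏ n ∈ Finset.Icc 1 k, (r * w n) :=
        Finset.prod_le_prod (fun n _ => hs_nonneg n)
          (fun n hn => hs_le n (Finset.mem_Icc.1 hn).1)
      have h2 : (∏ n ∈ Finset.Icc 1 k, sNum n A) ^ 2 ≤ (∏ n ∈ Finset.Icc 1 k, (r * w n)) ^ 2 :=
        pow_le_pow_left₀ (Finset.prod_nonneg fun n _ => hs_nonneg n) hprod 2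
      calc C ^ (2 * k) * (∏ n ∈ Finset.Icc 1 k, sNum n A) ^ 2
          ≤ C ^ (2 * k) * (∏ n ∈ Finset.Icc 1 k, (r * w n)) ^ 2 :=
            mul_le_mul_of_nonneg_left h2 (pow_nonneg hC.le _)
        _ = b k := by
            rw [Finset.prod_mul_distrib, Finset.prod_const, Nat.card_Icc,
              Nat.add_sub_cancel]
            simp only [hbdef]
            ring
  have hnorm_sum : Summable fun k => ‖(A ^ 2) ^ k‖ :=
    Summable.of_nonneg_of_le (fun k => norm_nonneg _) ha_le hb_sum
  have hSsum : Summable fun k => (A ^ 2) ^ k := hnorm_sum.of_norm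
  set S : H →L[ℂ] H := ∑' k, (A ^ 2) ^ k with hSdef
  have hshiftL : ∑' k, (A ^ 2) ^ (k + 1) = A ^ 2 * S := by
    simp_rw [pow_succ']
    exact hSsum.tsum_mul_left _
  have hshiftR : ∑' k, (A ^ 2) ^ (k + 1) = S * A ^ 2 := by
    simp_rw [pow_succ]
    exact hSsum.tsum_mul_right _
  have hSrec : S = 1 + ∑' k, (A ^ 2) ^ (k + 1) := by
    rw [hSdef]
    simpa using Summable.tsum_eq_zero_add hSsum
  have hgeomL : (1 - A ^ 2) * S = 1 := by
    rw [sub_mul, one_mul, ← hshiftL]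
    conv_lhs => rw [hSrec]
    abel
  have hgeomR : S * (1 - A ^ 2) = 1 := by
    rw [mul_sub, mul_one, ← hshiftR]
    conv_lhs => rw [hSrec]
    abel
  have hfact : ((1 : H →L[ℂ] H) - A) * (1 + A) = 1 - A ^ 2 := by noncomm_ring
  have hfact' : ((1 : H →L[ℂ] H) + A) * (1 - A) = 1 - A ^ 2 := by noncomm_ring
  have hcomm : A * S = S * A := by
    calc A * S = ∑' k, A * (A ^ 2) ^ k := (hSsum.tsum_mul_left A).symm
      _ = ∑' k, (A ^ 2) ^ k * A :=
          tsum_congr fun k => (((Commute.refl A).pow_right 2).pow_right k).eq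
      _ = S * A := hSsum.tsum_mul_right A
  have hSA : S * (1 - A) = (1 - A) * S := by
    rw [mul_sub, sub_mul, mul_one, one_mul, hcomm]
  have hleft : ((1 : H →L[ℂ] H) - A) * ((1 + A) * S) = 1 := by
    rw [← mul_assoc, hfact, hgeomL]
  have hright : ((1 : H →L[ℂ] H) + A) * S * ((1 : H →L[ℂ] H) - A) = 1 := by
    rw [mul_assoc, hSA, ← mul_assoc, hfact', hgeomL]
  set U : (H →L[ℂ] H)ˣ := ⟨1 - A, (1 + A) * S, hleft, hright⟩ with hUdef
  have hUnit : IsUnit ((1 : H →L[ℂ] H) - A) := ⟨U, rfl⟩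
  refine ⟨hUnit, ?_⟩
  have hinv : Ring.inverse ((1 : H →L[ℂ] H) - A) = (1 + A) * S := by
    rw [show ((1 : H →L[ℂ] H) - A) = (U : H →L[ℂ] H) from rfl, Ring.inverse_unit]
    rfl
  rw [hinv]
  have hnormS : ‖S‖ ≤ ∑' k, b k :=
    (norm_tsum_le_tsum_norm hnorm_sum).trans (Summable.tsum_le_tsum ha_le hnorm_sum hb_sum)
  have hsum_eq : ∑' k, b k = 1 + ∑' k, b (k + 1) := by
    rw [Summable.tsum_eq_zero_add hb_sum]
    norm_num [hbdef]
  have h1A : ‖(1 : H →L[ℂ] H) + A‖ ≤ 1 + r * w 1 := by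
    refine (norm_add_le _ _).trans (add_le_add ?_ hnormA)
    simpa [ContinuousLinearMap.one_def] using
      (ContinuousLinearMap.norm_id_le : ‖ContinuousLinearMap.id ℂ H‖ ≤ 1)
  have hfinal : ‖((1 : H →L[ℂ] H) + A) * S‖ ≤ (1 + r * w 1) * (1 + ∑' k, b (k + 1)) := by
    refine (norm_mul_le _ _).trans ?_
    exact mul_le_mul h1A (hnormS.trans_eq hsum_eq) (norm_nonneg _)
      (add_nonneg zero_le_one (mul_nonneg hr0 hw1))
  exact hfinal


end
end

section
/- Let H be a separable complex Hilbert space and A a compact operator on H. Suppose there is a strictly increasing surjective function g : [0,∞) → [0,∞) and a constant K > 0 such that ‖(zI − A)^{-1}‖ ≤ (1/K)·g(K/d(z,σ(A))) for every z ∉ σ(A). Then for every bounded operator B on H with B ≠ A, d̂(σ(B),σ(A)) ≤ K·h(‖A−B‖/K), where h(r) = 1/g̃(1/r) for r > 0, and g̃ : [0,∞) → [0,∞) denotes the inverse of g. -/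
open Filter Topology

noncomputable section

variable {H : Type*} [NormedAddCommGroup H] [InnerProductSpace ℂ H] [CompleteSpace H]
  [TopologicalSpace.SeparableSpace H]

theorem aux_key' {H : Type*} [NormedAddCommGroup H] [NormedSpace ℂ H] [CompleteSpace H]
    (A B : H →L[ℂ] H) (z : ℂ) (hz : z ∈ spectrum ℂ B) (hza : z ∉ spectrum ℂ A) :
    ‖resolvent A z‖⁻¹ ≤ ‖A - B‖ := by
  by_contra hlt
  push_neg at hlt
  rw [spectrum.mem_iff, not_not] at hza
  obtain ⟨u, hu⟩ := hza
  have hres : resolvent A z = ↑u⁻¹ := by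
    rw [resolvent, ← hu, Ring.inverse_unit]
  have hnorm : ‖(algebraMap ℂ (H →L[ℂ] H) z - B) - ↑u‖ < ‖(↑u⁻¹ : H →L[ℂ] H)‖⁻¹ := by
    rw [hu]
    calc ‖(algebraMap ℂ (H →L[ℂ] H) z - B) - ((algebraMap ℂ (H →L[ℂ] H) z) - A)‖
        = ‖A - B‖ := by rw [sub_sub_sub_cancel_left]
      _ < ‖(↑u⁻¹ : H →L[ℂ] H)‖⁻¹ := by rw [← hres]; exact hlt
  exact (spectrum.mem_iff.mp hz) (u.ofNearby _ hnorm).isUnit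

theorem aux_respos {H : Type*} [NormedAddCommGroup H] [NormedSpace ℂ H] [CompleteSpace H]
    (A B : H →L[ℂ] H) (z : ℂ) (hz : z ∈ spectrum ℂ B) (hza : z ∉ spectrum ℂ A) :
    0 < ‖resolvent A z‖ := by
  have hnt : Nontrivial (H →L[ℂ] H) := by
    by_contra h
    rw [not_nontrivial_iff_subsingleton] at h
    exact (spectrum.mem_iff.mp hz) (isUnit_of_subsingleton _)
  rw [spectrum.mem_iff, not_not] at hza
  obtain ⟨u, hu⟩ := hza
  have hres : resolvent A z = ↑u⁻¹ := by
    rw [resolvent, ← hu, Ring.inverse_unit]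
  rw [hres]
  exact Units.norm_pos u⁻¹

/-- the Bauer–Fike argument converting resolvent bounds into
spectral variation bounds. -/
theorem stmt_11 (A : H →L[ℂ] H) (hA : IsCompactOperator A)
    (g gi : ℝ → ℝ) (K : ℝ) (hK : 0 < K)
    (hmono : StrictMonoOn g (Set.Ici 0))
    (hmaps : ∀ x, 0 ≤ x → 0 ≤ g x)
    (hsurj : ∀ y, 0 ≤ y → ∃ x, 0 ≤ x ∧ g x = y)
    (hgi₁ : ∀ x, 0 ≤ x → gi (g x) = x)
    (hgi₂ : ∀ y, 0 ≤ y → 0 ≤ gi y ∧ g (gi y) = y)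
    (hres : ∀ z : ℂ, z ∉ spectrum ℂ A →
      ‖resolvent A z‖ ≤ (1 / K) * g (K / Metric.infDist z (spectrum ℂ A))) :
    ∀ B : H →L[ℂ] H, B ≠ A →
      specVar (spectrum ℂ B) (spectrum ℂ A) ≤ K * (gi (K / ‖A - B‖))⁻¹ := by
  intro B hB
  have hAB : 0 < ‖A - B‖ := by
    rw [norm_pos_iff, sub_ne_zero]; exact fun h => hB h.symm
  have hy : 0 < K / ‖A - B‖ := div_pos hK hAB
  set y := K / ‖A - B‖ with hy_def
  obtain ⟨hc0, hgc⟩ := hgi₂ y hy.le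
  set c := gi y with hc_def
  have hg0 : g 0 = 0 := by
    obtain ⟨x, hx0, hgx⟩ := hsurj 0 le_rfl
    rcases hx0.lt_or_eq with h | h
    · have h1 : g 0 < g x := hmono (Set.mem_Ici.mpr le_rfl) (Set.mem_Ici.mpr hx0) h
      have h2 := hmaps 0 le_rfl
      rw [hgx] at h1
      linarith
    · rw [← h] at hgx; exact hgx
  have hcpos : 0 < c := by
    rcases hc0.lt_or_eq with h | h
    · exact h
    · exfalso; rw [← h, hg0] at hgc; exact hy.ne' hgc.symm
  have hbound0 : 0 ≤ K * c⁻¹ := by positivity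
  rw [specVar]
  refine Real.iSup_le (fun z => ?_) hbound0
  obtain ⟨z, hz⟩ := z
  by_cases hza : z ∈ spectrum ℂ A
  · simpa [Metric.infDist_zero_of_mem hza] using hbound0
  · set d := Metric.infDist z (spectrum ℂ A) with hd_def
    have hd0 : 0 ≤ d := Metric.infDist_nonneg
    have h1 : ‖resolvent A z‖⁻¹ ≤ ‖A - B‖ := aux_key' A B z hz hza
    have hrpos : 0 < ‖resolvent A z‖ := aux_respos A B z hz hza
    have h2 : y ≤ g (K / d) := by
      have hr := hres z hza
      have h3 : ‖A - B‖⁻¹ ≤ ‖resolvent A z‖ := by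
        rw [← inv_inv ‖resolvent A z‖]
        exact inv_anti₀ (by positivity) h1
      have h4 : ‖A - B‖⁻¹ ≤ (1 / K) * g (K / d) := h3.trans hr
      calc y = K * ‖A - B‖⁻¹ := by rw [hy_def, div_eq_mul_inv]
        _ ≤ K * ((1 / K) * g (K / d)) := by nlinarith
        _ = g (K / d) := by field_simp
    have h5 : c ≤ K / d := by
      rw [← hgc] at h2
      exact (hmono.le_iff_le (Set.mem_Ici.mpr hc0) (Set.mem_Ici.mpr (by positivity))).mp h2
    rcases hd0.lt_or_eq with h | h
    · rw [le_div_iff₀ h] at h5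
      calc d = d * c * c⁻¹ := by field_simp
        _ ≤ K * c⁻¹ := by
          have hdc : d * c ≤ K := by nlinarith
          exact mul_le_mul_of_nonneg_right hdc (by positivity)
    · rw [← h]; exact hbound0

end
end

section
/- Let H be a separable complex Hilbert space. If A is a bounded normal operator on H, then for every bounded operator B on H the spectral variation satisfies d̂(σ(B),σ(A)) ≤ ‖A−B‖. Consequently, if A and B are both bounded normal operators on H, then the Hausdorff distance of their spectra satisfies Hdist(σ(A),σ(B)) ≤ ‖A−B‖. -/
open Filter Topology

noncomputable section

variable {H : Type*} [NormedAddCommGroup H] [InnerProductSpace ℂ H] [CompleteSpace H]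
  [TopologicalSpace.SeparableSpace H]


private theorem key_dist {H : Type*} [NormedAddCommGroup H] [InnerProductSpace ℂ H]
    [CompleteSpace H] (A B : H →L[ℂ] H) (hA : IsStarNormal A) {z : ℂ}
    (hz : z ∈ spectrum ℂ B) : Metric.infDist z (spectrum ℂ A) ≤ ‖A - B‖ := by
  by_contra h
  push_neg at h
  set d := Metric.infDist z (spectrum ℂ A) with hd
  have hd0 : 0 < d := lt_of_le_of_lt (norm_nonneg _) h
  have hzA : z ∉ spectrum ℂ A := by
    intro hmem
    exact absurd (hd.trans (Metric.infDist_zero_of_mem hmem)) hd0.ne'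
  rw [spectrum.notMem_iff] at hzA
  obtain ⟨u, hu⟩ := hzA
  have hnormal : IsStarNormal ((u : H →L[ℂ] H)) := by
    constructor
    rw [hu, star_sub, ← algebraMap_star_comm]
    have hc : Commute (star A) A := hA.star_comm_self
    exact Commute.sub_left (Algebra.commute_algebraMap_left _ _)
      (Commute.sub_right ((Algebra.commute_algebraMap_left _ _).symm) hc)
  have hcu : star u * u = u * star u := Units.ext (by
    simpa [Units.coe_star] using hnormal.star_comm_self.eq)
  have hcu' : u⁻¹ * (star u)⁻¹ = (star u)⁻¹ * u⁻¹ := by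
    rw [← mul_inv_rev, ← mul_inv_rev, hcu]
  have hRnormal : IsStarNormal ((↑u⁻¹ : H →L[ℂ] H)) := by
    constructor
    show star (↑u⁻¹ : H →L[ℂ] H) * ↑u⁻¹ = ↑u⁻¹ * star (↑u⁻¹ : H →L[ℂ] H)
    rw [← Units.coe_star_inv, ← Units.val_mul, ← Units.val_mul, hcu'.symm]
  have hspec : spectrum ℂ ((↑u⁻¹ : H →L[ℂ] H)) = (spectrum ℂ (u : H →L[ℂ] H))⁻¹ :=
    (spectrum.map_inv u).symm
  have hbound : ∀ μ ∈ spectrum ℂ ((↑u⁻¹ : H →L[ℂ] H)), ‖μ‖ ≤ d⁻¹ := by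
    intro μ hμ
    rcases eq_or_ne μ 0 with rfl | hμ0
    · simpa using inv_nonneg.mpr hd0.le
    · rw [hspec, Set.mem_inv, hu, ← spectrum.singleton_sub_eq] at hμ
      rw [Set.mem_sub] at hμ
      obtain ⟨zz, hzz, lam, hlam, hsum⟩ := hμ
      rw [Set.mem_singleton_iff] at hzz
      rw [hzz] at hsum
      have hμeq : μ = (z - lam)⁻¹ := by
        rw [hsum, inv_inv]
      have hdle : d ≤ ‖z - lam‖ := by
        rw [← dist_eq_norm]
        exact Metric.infDist_le_dist_of_mem hlam
      rw [hμeq, norm_inv]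
      exact inv_anti₀ hd0 hdle
  have hRle : ‖(↑u⁻¹ : H →L[ℂ] H)‖ ≤ d⁻¹ := by
    haveI := hRnormal
    have h1 : spectralRadius ℂ ((↑u⁻¹ : H →L[ℂ] H)) ≤ ENNReal.ofReal d⁻¹ := by
      refine iSup₂_le fun μ hμ => ?_
      rw [← enorm_eq_nnnorm, ← ofReal_norm]
      exact ENNReal.ofReal_le_ofReal (hbound μ hμ)
    rw [IsStarNormal.spectralRadius_eq_nnnorm, ← enorm_eq_nnnorm, ← ofReal_norm] at h1
    exact (ENNReal.ofReal_le_ofReal_iff (inv_nonneg.mpr hd0.le)).mp h1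
  have hsmall : ‖(↑u⁻¹ : H →L[ℂ] H) * (A - B)‖ < 1 := by
    calc ‖(↑u⁻¹ : H →L[ℂ] H) * (A - B)‖ ≤ ‖(↑u⁻¹ : H →L[ℂ] H)‖ * ‖A - B‖ :=
          norm_mul_le _ _
      _ ≤ d⁻¹ * ‖A - B‖ := mul_le_mul_of_nonneg_right hRle (norm_nonneg _)
      _ < d⁻¹ * d := by
          exact mul_lt_mul_of_pos_left h (inv_pos.mpr hd0)
      _ = 1 := inv_mul_cancel₀ hd0.ne'
  have hunit : IsUnit (1 + (↑u⁻¹ : H →L[ℂ] H) * (A - B)) := by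
    have h2 : ‖-((↑u⁻¹ : H →L[ℂ] H) * (A - B))‖ < 1 := by rwa [norm_neg]
    simpa [sub_neg_eq_add] using isUnit_one_sub_of_norm_lt_one h2
  have hfac : algebraMap ℂ (H →L[ℂ] H) z - B
      = (u : H →L[ℂ] H) * (1 + (↑u⁻¹ : H →L[ℂ] H) * (A - B)) := by
    rw [mul_add, mul_one, ← mul_assoc, u.mul_inv, one_mul, hu]
    abel
  exact spectrum.mem_iff.mp hz (hfac ▸ (u.isUnit.mul hunit))

/-- spectral variation and distance bounds for normal operators. -/
theorem stmt_14 (A : H →L[ℂ] H) (hA : IsStarNormal A) :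
    (∀ B : H →L[ℂ] H, specVar (spectrum ℂ B) (spectrum ℂ A) ≤ ‖A - B‖) ∧
    (∀ B : H →L[ℂ] H, IsStarNormal B →
      hausD (spectrum ℂ A) (spectrum ℂ B) ≤ ‖A - B‖) := by
  constructor
  · intro B
    exact Real.iSup_le (fun z => key_dist A B hA z.2) (norm_nonneg _)
  · intro B hB
    refine max_le ?_ ?_
    · refine Real.iSup_le (fun z => ?_) (norm_nonneg _)
      rw [show ‖A - B‖ = ‖B - A‖ from norm_sub_rev _ _]
      exact key_dist B A hB z.2
    · exact Real.iSup_le (fun z => key_dist A B hA z.2) (norm_nonneg _)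

end
end

section
/- Let p ∈ (0,∞) and let w_k = k^{-1/p} for k ≥ 1. Then for every k ≥ 1: (i) exp(−1/(p√k)) · e^{1/p}/k^{1/p} ≤ w̄_k ≤ e^{1/p}/k^{1/p}; (ii) exp(−3/(p√k)) · (2e)^{1/p}/k^{1/p} ≤ ẇ̄_k ≤ (2e)^{1/p}/k^{1/p}; and (iii) exp(−(6/p)√k) · (2e)^{k/p}/(k!)^{1/p} ≤ ∏_{n=1}^k ẇ̄_n ≤ (2e)^{k/p}/(k!)^{1/p}. -/
open Filter Topology

noncomputable section

section Aux15

-- log(1+1/k) ≤ 1/k type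
lemma log_ratio_le (k : ℕ) (hk : 1 ≤ k) :
    Real.log ((k:ℝ) + 1) - Real.log k ≤ 1 / k := by
  have hk0 : (0:ℝ) < k := by exact_mod_cast hk
  rw [← Real.log_div (by positivity) (by positivity)]
  have := Real.log_le_sub_one_of_pos (x := ((k:ℝ)+1)/k) (by positivity)
  have h : ((k:ℝ)+1)/k - 1 = 1/k := by field_simp; ring
  linarith [h ▸ this]

-- log(1+1/k) ≥ 1/(k+1)
lemma log_ratio_ge (k : ℕ) (hk : 1 ≤ k) :
    1 / ((k:ℝ) + 1) ≤ Real.log ((k:ℝ) + 1) - Real.log k := by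
  have hk0 : (0:ℝ) < k := by exact_mod_cast hk
  have := Real.log_le_sub_one_of_pos (x := (k:ℝ)/((k:ℝ)+1)) (by positivity)
  rw [Real.log_div (by positivity) (by positivity)] at this
  have h : (k:ℝ)/((k:ℝ)+1) - 1 = -(1/((k:ℝ)+1)) := by field_simp; ring
  linarith [h ▸ this]

lemma log_fact_lb : ∀ k : ℕ, 1 ≤ k →
    (k:ℝ) * Real.log k - k ≤ Real.log (k.factorial) := by
  intro k hk
  induction k with
  | zero => omega
  | succ n ih =>
    rcases Nat.eq_or_lt_of_le hk with h | h
    · simp [← h]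
    · have hn : 1 ≤ n := by omega
      have hn0 : (0:ℝ) < n := by exact_mod_cast hn
      have ihn := ih hn
      have hfact : ((n+1).factorial : ℝ) = (n+1) * n.factorial := by
        rw [Nat.factorial_succ]; push_cast; ring
      have hlog : Real.log ((n+1).factorial) = Real.log ((n:ℝ)+1) + Real.log (n.factorial) := by
        rw [hfact, Real.log_mul (by positivity) (by positivity)]
      have hr := log_ratio_le n hn
      have : (n:ℝ) * (Real.log ((n:ℝ)+1) - Real.log n) ≤ 1 := by
        calc (n:ℝ) * (Real.log ((n:ℝ)+1) - Real.log n) ≤ (n:ℝ) * (1/n) := by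
              apply mul_le_mul_of_nonneg_left hr (by positivity)
          _ = 1 := by field_simp
      push_cast
      rw [hlog]
      nlinarith

lemma sqrt_gap (k : ℕ) : 1 / (2 * Real.sqrt ((k:ℝ)+1)) ≤ Real.sqrt ((k:ℝ)+1) - Real.sqrt k := by
  have hb : (0:ℝ) < Real.sqrt ((k:ℝ)+1) := Real.sqrt_pos.2 (by positivity)
  have ha : (0:ℝ) ≤ Real.sqrt k := Real.sqrt_nonneg _
  have hb2 : Real.sqrt ((k:ℝ)+1) ^ 2 = (k:ℝ)+1 := Real.sq_sqrt (by positivity)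
  have ha2 : Real.sqrt (k:ℝ) ^ 2 = (k:ℝ) := Real.sq_sqrt (by positivity)
  rw [div_le_iff₀ (by positivity)]
  nlinarith [sq_nonneg (Real.sqrt ((k:ℝ)+1) - Real.sqrt k)]

lemma ub_step (k : ℕ) (hk : 3 ≤ k) :
    1 ≤ (k:ℝ) * (Real.log ((k:ℝ)+1) - Real.log k) + (Real.sqrt ((k:ℝ)+1) - Real.sqrt k) := by
  have hk0 : (0:ℝ) < k := by exact_mod_cast Nat.lt_of_lt_of_le (by norm_num) hk
  have h1 : 1 / ((k:ℝ)+1) ≤ Real.log ((k:ℝ)+1) - Real.log k := log_ratio_ge k (by omega)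
  have h2 := sqrt_gap k
  have hs : (2:ℝ) ≤ Real.sqrt ((k:ℝ)+1) := by
    rw [show (2:ℝ) = Real.sqrt 4 by rw [show (4:ℝ) = 2^2 by norm_num, Real.sqrt_sq (by norm_num)]]
    apply Real.sqrt_le_sqrt
    have : (3:ℝ) ≤ (k:ℝ) := by exact_mod_cast hk
    linarith
  have hb : (0:ℝ) < Real.sqrt ((k:ℝ)+1) := by linarith
  have hb2 : Real.sqrt ((k:ℝ)+1) ^ 2 = (k:ℝ)+1 := Real.sq_sqrt (by positivity)
  have h3 : 1 / ((k:ℝ)+1) ≤ 1 / (2 * Real.sqrt ((k:ℝ)+1)) := by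
    apply one_div_le_one_div_of_le (by positivity)
    nlinarith
  have h4 : (k:ℝ) * (Real.log ((k:ℝ)+1) - Real.log k) ≥ (k:ℝ) / ((k:ℝ)+1) := by
    calc (k:ℝ) * (Real.log ((k:ℝ)+1) - Real.log k) ≥ (k:ℝ) * (1/((k:ℝ)+1)) :=
          mul_le_mul_of_nonneg_left h1 (by positivity)
      _ = (k:ℝ)/((k:ℝ)+1) := by ring
  have h5 : (k:ℝ)/((k:ℝ)+1) = 1 - 1/((k:ℝ)+1) := by field_simp; ring
  linarith

lemma sqrt_two_gt : (1.414:ℝ) ≤ Real.sqrt 2 := by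
  rw [show (1.414:ℝ) = Real.sqrt (1.414^2) by rw [Real.sqrt_sq (by norm_num)]]
  apply Real.sqrt_le_sqrt; norm_num

lemma sqrt_three_gt : (1.73:ℝ) ≤ Real.sqrt 3 := by
  rw [show (1.73:ℝ) = Real.sqrt (1.73^2) by rw [Real.sqrt_sq (by norm_num)]]
  apply Real.sqrt_le_sqrt; norm_num

lemma log_fact_ub_ge3 : ∀ k : ℕ, 3 ≤ k →
    Real.log (k.factorial) ≤ (k:ℝ) * Real.log k - k + Real.sqrt k := by
  intro k hk
  induction k, hk using Nat.le_induction with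
  | base =>
    have h6 : ((3:ℕ).factorial : ℝ) = 6 := by norm_num [Nat.factorial]
    rw [h6, show (6:ℝ) = 2*3 by norm_num, Real.log_mul (by norm_num) (by norm_num)]
    have h32 : 1/((2:ℝ)+1) ≤ Real.log ((2:ℝ)+1) - Real.log 2 := by
      have := log_ratio_ge 2 (by norm_num)
      push_cast at this ⊢; linarith
    have hl2 := Real.log_two_gt_d9
    have hs3 := sqrt_three_gt
    push_cast
    nlinarith
  | succ n hn ih =>
    have hn0 : (0:ℝ) < n := by exact_mod_cast Nat.lt_of_lt_of_le (by norm_num) hn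
    have hfact : ((n+1).factorial : ℝ) = ((n:ℝ)+1) * n.factorial := by
      rw [Nat.factorial_succ]; push_cast; ring
    have hlog : Real.log ((n+1).factorial) = Real.log ((n:ℝ)+1) + Real.log (n.factorial) := by
      rw [hfact, Real.log_mul (by positivity) (by positivity)]
    have hstep := ub_step n hn
    push_cast
    rw [hlog]
    nlinarith

lemma log_fact_ub : ∀ k : ℕ, 1 ≤ k →
    Real.log (k.factorial) ≤ (k:ℝ) * Real.log k - k + Real.sqrt k := by
  intro k hk
  match k, hk with
  | 1, _ => simp [Nat.factorial]
  | 2, _ =>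
    have h2 : ((2:ℕ).factorial : ℝ) = 2 := by norm_num [Nat.factorial]
    rw [h2]
    have := Real.log_two_gt_d9
    have hs2 : (1.414:ℝ) ≤ Real.sqrt 2 := sqrt_two_gt
    push_cast
    nlinarith
  | (n+3), _ => exact log_fact_ub_ge3 (n+3) (by omega)

lemma sum_inv_sqrt : ∀ k : ℕ, (∑ n ∈ Finset.Icc 1 k, 1 / Real.sqrt n) ≤ 2 * Real.sqrt k := by
  intro k
  induction k with
  | zero => simp
  | succ n ih =>
    rw [show n + 1 = n + 1 by rfl, Finset.sum_Icc_succ_top (by omega)]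
    have hgap := sqrt_gap n
    have hb : (0:ℝ) < Real.sqrt ((n:ℝ)+1) := Real.sqrt_pos.2 (by positivity)
    have h2 : 2*(1/(2*Real.sqrt ((n:ℝ)+1))) = 1/Real.sqrt ((n:ℝ)+1) := by field_simp
    push_cast
    linarith

-- gmean in exp form
lemma gmean_eq (p : ℝ) (hp : 0 < p) (k : ℕ) (hk : 1 ≤ k) :
    gmean (fun n : ℕ => (n : ℝ) ^ (-(1 : ℝ) / p)) k
      = Real.exp (-(Real.log (k.factorial)) / (p * k)) := by
  have hk0 : (0:ℝ) < k := by exact_mod_cast hk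
  have hprod : (∏ n ∈ Finset.Icc 1 k, ((n:ℝ)) ^ (-(1 : ℝ) / p))
      = ((k.factorial : ℝ)) ^ (-(1:ℝ)/p) := by
    rw [Real.finset_prod_rpow _ _ (fun i hi => by positivity)]
    congr 1
    rw [← Nat.cast_prod]
    congr 1
    rw [← Finset.Ico_add_one_right_eq_Icc, Finset.prod_Ico_id_eq_factorial]
  have hfpos : (0:ℝ) < (k.factorial : ℝ) := by exact_mod_cast k.factorial_pos
  unfold gmean
  rw [hprod, ← Real.rpow_mul hfpos.le, Real.rpow_def_of_pos hfpos]
  congr 1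
  field_simp

lemma gmean_bounds (p : ℝ) (hp : 0 < p) (k : ℕ) (hk : 1 ≤ k) :
    Real.exp (-(1/(p*Real.sqrt k)) + (1/p - Real.log k/p))
      ≤ gmean (fun n : ℕ => (n : ℝ) ^ (-(1 : ℝ) / p)) k ∧
    gmean (fun n : ℕ => (n : ℝ) ^ (-(1 : ℝ) / p)) k ≤ Real.exp (1/p - Real.log k/p) := by
  have hk0 : (0:ℝ) < k := by exact_mod_cast hk
  have hs : Real.sqrt k * Real.sqrt k = (k:ℝ) := Real.mul_self_sqrt hk0.le
  have hs0 : (0:ℝ) < Real.sqrt k := Real.sqrt_pos.2 hk0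
  have hub := log_fact_ub k hk
  have hlb := log_fact_lb k hk
  set L := Real.log (k.factorial) with hL
  set a := Real.log k with ha
  set s := Real.sqrt k with hss
  rw [gmean_eq p hp k hk, ← hL]
  constructor
  · rw [Real.exp_le_exp]
    have e1 : -(1/(p*s)) + (1/p - a/p) = ((k:ℝ) - (k:ℝ)*a - s)/(p*(k:ℝ)) := by
      rw [← hs]; field_simp; ring
    have e2 : -L/(p*(k:ℝ)) = (-L)/(p*(k:ℝ)) := by ring
    rw [e1, e2, div_le_div_iff₀ (by positivity) (by positivity)]
    have := mul_le_mul_of_nonneg_right (show (k:ℝ) - (k:ℝ)*a - s ≤ -L by linarith)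
      (le_of_lt (mul_pos hp hk0))
    linarith
  · rw [Real.exp_le_exp]
    have e1 : 1/p - a/p = ((k:ℝ) - (k:ℝ)*a)/(p*(k:ℝ)) := by field_simp
    have e2 : -L/(p*(k:ℝ)) = (-L)/(p*(k:ℝ)) := by ring
    rw [e1, e2, div_le_div_iff₀ (by positivity) (by positivity)]
    have := mul_le_mul_of_nonneg_right (show -L ≤ (k:ℝ) - (k:ℝ)*a by linarith)
      (le_of_lt (mul_pos hp hk0))
    linarith

lemma dbl_bounds (p : ℝ) (hp : 0 < p) (n : ℕ) (hn : 1 ≤ n) :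
    Real.exp (-(3/(p*Real.sqrt n)) + ((Real.log 2 + 1)/p - Real.log n/p))
      ≤ dbl (gmean (fun m : ℕ => (m : ℝ) ^ (-(1 : ℝ) / p))) n ∧
    dbl (gmean (fun m : ℕ => (m : ℝ) ^ (-(1 : ℝ) / p))) n
      ≤ Real.exp ((Real.log 2 + 1)/p - Real.log n/p) := by
  have hn0 : (0:ℝ) < n := by exact_mod_cast hn
  set m := (n + 1) / 2 with hm
  have hm1 : 1 ≤ m := by omega
  have hmk : m ≤ n := by omega
  have h2m : n ≤ 2 * m := by omega
  have h2m' : 2 * m ≤ n + 1 := by omega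
  have hm0 : (0:ℝ) < m := by exact_mod_cast hm1
  have hgb := gmean_bounds p hp m hm1
  have hdbl : dbl (gmean (fun m : ℕ => (m : ℝ) ^ (-(1 : ℝ) / p))) n
      = gmean (fun m : ℕ => (m : ℝ) ^ (-(1 : ℝ) / p)) m := rfl
  rw [hdbl]
  have hlogk : Real.log n ≤ Real.log 2 + Real.log m := by
    rw [← Real.log_mul (by norm_num) (by positivity)]
    apply Real.log_le_log hn0
    exact_mod_cast h2m
  constructor
  · refine le_trans ?_ hgb.1
    rw [Real.exp_le_exp]
    have hsm0 : (0:ℝ) < Real.sqrt m := Real.sqrt_pos.2 hm0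
    have hsn0 : (0:ℝ) < Real.sqrt n := Real.sqrt_pos.2 hn0
    -- 1/√m ≤ 2/√n
    have h4m : Real.sqrt n ≤ 2 * Real.sqrt m := by
      rw [show (2:ℝ) * Real.sqrt m = Real.sqrt (4 * m) by
        rw [show (4:ℝ) * m = 2^2 * m by ring, Real.sqrt_mul (by positivity),
          Real.sqrt_sq (by norm_num)]]
      apply Real.sqrt_le_sqrt
      have : (n:ℝ) ≤ 2*(m:ℝ) := by exact_mod_cast h2m
      linarith
    have hinv : 1 / Real.sqrt m ≤ 2 / Real.sqrt n := by
      rw [div_le_div_iff₀ hsm0 hsn0]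
      linarith
    -- log 2 + log m - log n ≤ 1/√n
    have hlog2 : Real.log 2 + Real.log m - Real.log n ≤ 1/Real.sqrt n := by
      have h1 : Real.log 2 + Real.log m ≤ Real.log ((n:ℝ)+1) := by
        rw [← Real.log_mul (by norm_num) (by positivity)]
        apply Real.log_le_log (by positivity)
        have : (2:ℝ)*(m:ℝ) ≤ (n:ℝ)+1 := by exact_mod_cast h2m'
        linarith
      have h2 := log_ratio_le n hn
      have h3 : 1/(n:ℝ) ≤ 1/Real.sqrt n := by
        rw [div_le_div_iff₀ hn0 hsn0]
        nlinarith [Real.mul_self_sqrt hn0.le, Real.sqrt_le_sqrt (show (1:ℝ) ≤ n by exact_mod_cast hn), Real.sqrt_one]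
      linarith
    -- combine: -(3/(p√n)) + (log2+1)/p - log n/p ≤ -(1/(p√m)) + 1/p - log m/p
    have e1 : -(3/(p*Real.sqrt n)) + ((Real.log 2 + 1)/p - Real.log n/p)
        = (-(3/Real.sqrt n) + (Real.log 2 + 1 - Real.log n))/p := by field_simp
    have e2 : -(1/(p*Real.sqrt m)) + (1/p - Real.log m/p)
        = (-(1/Real.sqrt m) + (1 - Real.log m))/p := by field_simp
    rw [e1, e2, div_le_div_iff₀ hp hp]
    have : -(3/Real.sqrt n) + (Real.log 2 + 1 - Real.log n) ≤ -(1/Real.sqrt m) + (1 - Real.log m) := by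
      have h5 : 1/Real.sqrt m + (Real.log 2 + Real.log m - Real.log n) ≤ 3/Real.sqrt n := by
        have : (2:ℝ)/Real.sqrt n + 1/Real.sqrt n = 3/Real.sqrt n := by ring
        linarith
      linarith
    nlinarith
  · refine le_trans hgb.2 ?_
    rw [Real.exp_le_exp]
    have e1 : 1/p - Real.log m/p = (1 - Real.log m)/p := by ring
    have e2 : (Real.log 2 + 1)/p - Real.log n/p = (Real.log 2 + 1 - Real.log n)/p := by ring
    rw [e1, e2, div_le_div_iff₀ hp hp]
    nlinarith

theorem stmt_15_aux (p : ℝ) (hp : 0 < p) :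
    ∀ k : ℕ, 1 ≤ k →
      (Real.exp (-(1 / (p * Real.sqrt k))) * Real.exp 1 ^ ((1 : ℝ) / p) / (k : ℝ) ^ ((1 : ℝ) / p)
          ≤ gmean (fun n : ℕ => (n : ℝ) ^ (-(1 : ℝ) / p)) k ∧
        gmean (fun n : ℕ => (n : ℝ) ^ (-(1 : ℝ) / p)) k
          ≤ Real.exp 1 ^ ((1 : ℝ) / p) / (k : ℝ) ^ ((1 : ℝ) / p)) ∧
      (Real.exp (-(3 / (p * Real.sqrt k))) *
            (2 * Real.exp 1) ^ ((1 : ℝ) / p) / (k : ℝ) ^ ((1 : ℝ) / p)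
          ≤ dbl (gmean (fun n : ℕ => (n : ℝ) ^ (-(1 : ℝ) / p))) k ∧
        dbl (gmean (fun n : ℕ => (n : ℝ) ^ (-(1 : ℝ) / p))) k
          ≤ (2 * Real.exp 1) ^ ((1 : ℝ) / p) / (k : ℝ) ^ ((1 : ℝ) / p)) ∧
      (Real.exp (-(6 / p) * Real.sqrt k) *
            (2 * Real.exp 1) ^ ((k : ℝ) / p) / (k.factorial : ℝ) ^ ((1 : ℝ) / p)
          ≤ ∏ n ∈ Finset.Icc 1 k, dbl (gmean (fun m : ℕ => (m : ℝ) ^ (-(1 : ℝ) / p))) n ∧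
        (∏ n ∈ Finset.Icc 1 k, dbl (gmean (fun m : ℕ => (m : ℝ) ^ (-(1 : ℝ) / p))) n)
          ≤ (2 * Real.exp 1) ^ ((k : ℝ) / p) / (k.factorial : ℝ) ^ ((1 : ℝ) / p)) := by
  intro k hk
  have hk0 : (0:ℝ) < k := by exact_mod_cast hk
  have hf0 : (0:ℝ) < (k.factorial : ℝ) := by exact_mod_cast k.factorial_pos
  have ck : (k:ℝ) ^ ((1:ℝ)/p) = Real.exp (Real.log k / p) := by
    rw [Real.rpow_def_of_pos hk0]; congr 1; ring
  have ce : Real.exp 1 ^ ((1:ℝ)/p) = Real.exp (1/p) := Real.exp_one_rpow _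
  have hlog2e : Real.log (2 * Real.exp 1) = Real.log 2 + 1 := by
    rw [Real.log_mul (by norm_num) (Real.exp_ne_zero 1), Real.log_exp]
  have c2e : (2 * Real.exp 1 : ℝ) ^ ((1:ℝ)/p) = Real.exp ((Real.log 2 + 1)/p) := by
    rw [Real.rpow_def_of_pos (by positivity), hlog2e]; congr 1; ring
  have c2ek : (2 * Real.exp 1 : ℝ) ^ ((k:ℝ)/p) = Real.exp ((Real.log 2 + 1)*((k:ℝ)/p)) := by
    rw [Real.rpow_def_of_pos (by positivity), hlog2e]
  have cf : ((k.factorial : ℝ)) ^ ((1:ℝ)/p) = Real.exp (Real.log (k.factorial) / p) := by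
    rw [Real.rpow_def_of_pos hf0]; congr 1; ring
  have hsumlog : ∑ n ∈ Finset.Icc 1 k, Real.log n = Real.log (k.factorial) := by
    rw [← Real.log_prod (fun i hi => by
      have : 1 ≤ i := (Finset.mem_Icc.1 hi).1
      exact Nat.cast_ne_zero.2 (by omega))]
    congr 1
    rw [← Nat.cast_prod]
    congr 1
    rw [← Finset.Ico_add_one_right_eq_Icc, Finset.prod_Ico_id_eq_factorial]
  refine ⟨⟨?_, ?_⟩, ⟨?_, ?_⟩, ?_, ?_⟩
  · rw [ce, ck, ← Real.exp_add, ← Real.exp_sub]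
    refine le_trans (le_of_eq ?_) (gmean_bounds p hp k hk).1
    congr 1; ring
  · rw [ce, ck, ← Real.exp_sub]
    exact (gmean_bounds p hp k hk).2
  · rw [c2e, ck, ← Real.exp_add, ← Real.exp_sub]
    refine le_trans (le_of_eq ?_) (dbl_bounds p hp k hk).1
    congr 1; ring
  · rw [c2e, ck, ← Real.exp_sub]
    exact (dbl_bounds p hp k hk).2
  -- part (iii)
  · have hS := sum_inv_sqrt k
    have hsum : ∑ n ∈ Finset.Icc 1 k, (-(3/(p*Real.sqrt n)) + ((Real.log 2 + 1)/p - Real.log n/p))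
        = -(3/p) * (∑ n ∈ Finset.Icc 1 k, 1/Real.sqrt n)
          + ((k:ℝ)*(Real.log 2 + 1)/p - Real.log (k.factorial)/p) := by
      rw [Finset.sum_add_distrib, Finset.sum_sub_distrib, Finset.sum_const, Nat.card_Icc,
        ← Finset.sum_div, hsumlog, Finset.mul_sum]
      congr 1
      · exact Finset.sum_congr rfl fun i _ => by rw [neg_mul, div_mul_div_comm, mul_one]
      · simp only [nsmul_eq_mul]
        push_cast [Nat.add_sub_cancel]
        ring
    rw [c2ek, cf, ← Real.exp_add, ← Real.exp_sub]
    calc Real.exp (-(6/p) * Real.sqrt k + (Real.log 2 + 1)*((k:ℝ)/p) - Real.log (k.factorial)/p)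
        ≤ Real.exp (-(3/p) * (∑ n ∈ Finset.Icc 1 k, 1/Real.sqrt n)
            + ((k:ℝ)*(Real.log 2 + 1)/p - Real.log (k.factorial)/p)) := by
          rw [Real.exp_le_exp]
          have h1 : (3/p) * (∑ n ∈ Finset.Icc 1 k, 1/Real.sqrt n) ≤ (3/p) * (2*Real.sqrt k) :=
            mul_le_mul_of_nonneg_left hS (by positivity)
          have h2 : (Real.log 2 + 1)*((k:ℝ)/p) = (k:ℝ)*(Real.log 2 + 1)/p := by ring
          have h3 : (3/p) * (2*Real.sqrt k) = (6/p) * Real.sqrt k := by ring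
          linarith
      _ = ∏ n ∈ Finset.Icc 1 k,
            Real.exp (-(3/(p*Real.sqrt n)) + ((Real.log 2 + 1)/p - Real.log n/p)) := by
          rw [← Real.exp_sum, hsum]
      _ ≤ ∏ n ∈ Finset.Icc 1 k, dbl (gmean (fun m : ℕ => (m : ℝ) ^ (-(1 : ℝ) / p))) n := by
          apply Finset.prod_le_prod (fun i _ => (Real.exp_pos _).le)
          intro i hi
          exact (dbl_bounds p hp i (Finset.mem_Icc.1 hi).1).1
  · have hsum : ∑ n ∈ Finset.Icc 1 k, ((Real.log 2 + 1)/p - Real.log n/p)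
        = (k:ℝ)*(Real.log 2 + 1)/p - Real.log (k.factorial)/p := by
      rw [Finset.sum_sub_distrib, Finset.sum_const, Nat.card_Icc, ← Finset.sum_div, hsumlog]
      simp only [nsmul_eq_mul]
      push_cast [Nat.add_sub_cancel]
      ring
    rw [c2ek, cf, ← Real.exp_sub]
    calc (∏ n ∈ Finset.Icc 1 k, dbl (gmean (fun m : ℕ => (m : ℝ) ^ (-(1 : ℝ) / p))) n)
        ≤ ∏ n ∈ Finset.Icc 1 k, Real.exp ((Real.log 2 + 1)/p - Real.log n/p) := by
          apply Finset.prod_le_prod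
          · intro i hi
            exact le_trans (Real.exp_pos _).le (dbl_bounds p hp i (Finset.mem_Icc.1 hi).1).1
          · intro i hi
            exact (dbl_bounds p hp i (Finset.mem_Icc.1 hi).1).2
      _ = Real.exp ((k:ℝ)*(Real.log 2 + 1)/p - Real.log (k.factorial)/p) := by
          rw [← Real.exp_sum, hsum]
      _ ≤ Real.exp ((Real.log 2 + 1)*((k:ℝ)/p) - Real.log (k.factorial)/p) := by
          rw [Real.exp_le_exp]
          have : (Real.log 2 + 1)*((k:ℝ)/p) = (k:ℝ)*(Real.log 2 + 1)/p := by ring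
          linarith

end Aux15

/-- bounds for `w̄`, `ẇ̄` and `∏ ẇ̄` for `w_k = k^{-1/p}`. -/
theorem stmt_15 (p : ℝ) (hp : 0 < p) :
    ∀ k : ℕ, 1 ≤ k →
      (Real.exp (-(1 / (p * Real.sqrt k))) * Real.exp 1 ^ ((1 : ℝ) / p) / (k : ℝ) ^ ((1 : ℝ) / p)
          ≤ gmean (fun n : ℕ => (n : ℝ) ^ (-(1 : ℝ) / p)) k ∧
        gmean (fun n : ℕ => (n : ℝ) ^ (-(1 : ℝ) / p)) k
          ≤ Real.exp 1 ^ ((1 : ℝ) / p) / (k : ℝ) ^ ((1 : ℝ) / p)) ∧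
      (Real.exp (-(3 / (p * Real.sqrt k))) *
            (2 * Real.exp 1) ^ ((1 : ℝ) / p) / (k : ℝ) ^ ((1 : ℝ) / p)
          ≤ dbl (gmean (fun n : ℕ => (n : ℝ) ^ (-(1 : ℝ) / p))) k ∧
        dbl (gmean (fun n : ℕ => (n : ℝ) ^ (-(1 : ℝ) / p))) k
          ≤ (2 * Real.exp 1) ^ ((1 : ℝ) / p) / (k : ℝ) ^ ((1 : ℝ) / p)) ∧
      (Real.exp (-(6 / p) * Real.sqrt k) *
            (2 * Real.exp 1) ^ ((k : ℝ) / p) / (k.factorial : ℝ) ^ ((1 : ℝ) / p)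
          ≤ ∏ n ∈ Finset.Icc 1 k, dbl (gmean (fun m : ℕ => (m : ℝ) ^ (-(1 : ℝ) / p))) n ∧
        (∏ n ∈ Finset.Icc 1 k, dbl (gmean (fun m : ℕ => (m : ℝ) ^ (-(1 : ℝ) / p))) n)
          ≤ (2 * Real.exp 1) ^ ((k : ℝ) / p) / (k.factorial : ℝ) ^ ((1 : ℝ) / p)) :=
  stmt_15_aux p hp

end
end

section
/- Let p, b ∈ (0,∞). Define Φ_p^{L,u}(r) = Σ_{k=0}^∞ r^k/(k!)^{1/p} and Φ_{p,b}^{L,l}(r) = Σ_{k=0}^∞ exp(−b√k)·r^k/(k!)^{1/p}. Then both power series have infinite radius of convergence (so Φ_p^{L,u} and Φ_{p,b}^{L,l} extend to entire functions), and log Φ_p^{L,u}(r) ∼ (1/p)·r^p and log Φ_{p,b}^{L,l}(r) ∼ (1/p)·r^p as r → ∞. -/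
open Filter Topology

noncomputable section

lemma my_log_ge (y : ℝ) (hy : 0 < y) : 1 - 1/y ≤ Real.log y := by
  have h := Real.log_le_sub_one_of_pos (x := y⁻¹) (by positivity)
  rw [Real.log_inv] at h
  have : 1/y = y⁻¹ := one_div y
  linarith

lemma my_term_le {p : ℝ} (hp : 0 < p) (x : ℝ) (hx : 0 ≤ x) (k : ℕ) :
    x ^ k / (k.factorial : ℝ) ^ ((1:ℝ)/p) ≤ Real.exp (x ^ p / p) := by
  have hf : (0:ℝ) < (k.factorial : ℝ) := by exact_mod_cast k.factorial_pos
  have hfp : (0:ℝ) < (k.factorial : ℝ) ^ ((1:ℝ)/p) := Real.rpow_pos_of_pos hf _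
  set A : ℝ := x ^ k / (k.factorial : ℝ) ^ ((1:ℝ)/p) with hA
  have hA0 : 0 ≤ A := by positivity
  have key : A ^ p ≤ Real.exp (x ^ p) := by
    have h1 : A ^ p = (x ^ p) ^ k / (k.factorial : ℝ) := by
      rw [hA, Real.div_rpow (by positivity) hfp.le]
      rw [← Real.rpow_natCast x k, ← Real.rpow_mul hx, mul_comm (k:ℝ) p,
        Real.rpow_mul hx, Real.rpow_natCast (x ^ p) k,
        ← Real.rpow_mul hf.le, one_div, inv_mul_cancel₀ hp.ne', Real.rpow_one]
    rw [h1]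
    exact Real.pow_div_factorial_le_exp _ (Real.rpow_nonneg hx p) k
  calc A = (A ^ p) ^ (1/p) := by
          rw [← Real.rpow_mul hA0, mul_one_div, div_self hp.ne', Real.rpow_one]
    _ ≤ (Real.exp (x ^ p)) ^ ((1:ℝ)/p) :=
          Real.rpow_le_rpow (Real.rpow_nonneg hA0 p) key (by positivity)
    _ = Real.exp (x ^ p / p) := by
          rw [← Real.exp_one_rpow (x ^ p), ← Real.rpow_mul (Real.exp_pos 1).le,
            mul_one_div, Real.exp_one_rpow]

lemma my_log_factorial_le : ∀ k : ℕ, 1 ≤ k →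
    Real.log (k.factorial : ℝ) ≤ 1 + Real.log k + k * Real.log k - k := by
  intro k hk
  induction k, hk using Nat.le_induction with
  | base => simp [Nat.factorial]
  | succ k hk ih =>
    have hk0 : (0:ℝ) < k := by exact_mod_cast hk
    have hk1 : (0:ℝ) < (k:ℝ) + 1 := by linarith
    have hfact : ((k+1).factorial : ℝ) = ((k:ℝ)+1) * (k.factorial : ℝ) := by
      push_cast [Nat.factorial_succ]; ring
    have hfp : (0:ℝ) < (k.factorial : ℝ) := by exact_mod_cast k.factorial_pos
    have hlog : Real.log ((k+1).factorial : ℝ) = Real.log ((k:ℝ)+1) + Real.log (k.factorial:ℝ) := by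
      rw [hfact, Real.log_mul hk1.ne' hfp.ne']
    have hdiff : 1/((k:ℝ)+1) ≤ Real.log ((k:ℝ)+1) - Real.log k := by
      rw [← Real.log_div hk1.ne' hk0.ne']
      have := my_log_ge (((k:ℝ)+1)/k) (by positivity)
      have h2 : 1/(((k:ℝ)+1)/k) = k/((k:ℝ)+1) := by field_simp
      rw [h2] at this
      have h3 : 1 - (k:ℝ)/((k:ℝ)+1) = 1/((k:ℝ)+1) := by field_simp; ring
      linarith
    have hmul : 1 ≤ ((k:ℝ)+1) * (Real.log ((k:ℝ)+1) - Real.log k) := by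
      have := mul_le_mul_of_nonneg_left hdiff hk1.le
      rw [mul_one_div, div_self hk1.ne'] at this
      linarith
    push_cast
    push_cast at ih
    rw [hlog]
    nlinarith [ih]

lemma my_log_factorial_ge (k : ℕ) :
    (k:ℝ) * Real.log k - k ≤ Real.log (k.factorial : ℝ) := by
  rcases Nat.eq_zero_or_pos k with h | h
  · simp [h]
  have hk0 : (0:ℝ) < k := by exact_mod_cast h
  have hfp : (0:ℝ) < (k.factorial : ℝ) := by exact_mod_cast k.factorial_pos
  have := Real.pow_div_factorial_le_exp (k:ℝ) (le_of_lt hk0) k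
  have h2 : (k:ℝ)^k ≤ (k.factorial : ℝ) * Real.exp k := by
    rw [div_le_iff₀ hfp] at this; linarith [this]
  have h3 := Real.log_le_log (by positivity) h2
  rw [Real.log_pow, Real.log_mul hfp.ne' (Real.exp_pos _).ne', Real.log_exp] at h3
  linarith

lemma my_tendsto_aux :
    Tendsto (fun t : ℝ => ((⌈t⌉₊:ℝ) * Real.log t - Real.log (⌈t⌉₊.factorial : ℝ)) / t)
      atTop (nhds 1) := by
  have hlog : Tendsto (fun t : ℝ => Real.log t / t) atTop (nhds 0) :=
    Real.isLittleO_log_id_atTop.tendsto_div_nhds_zero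
  have h0 : Tendsto (fun t : ℝ => t⁻¹) atTop (nhds 0) := tendsto_inv_atTop_zero
  apply tendsto_of_tendsto_of_tendsto_of_le_of_le'
    (g := fun t : ℝ => 1 - 3*t⁻¹ - t⁻¹*t⁻¹ - Real.log 2 * t⁻¹ - Real.log t / t)
    (h := fun t : ℝ => 1 + t⁻¹)
  · have := ((((tendsto_const_nhds (x := (1:ℝ)) (f := atTop)).sub (h0.const_mul 3)).sub
      (h0.mul h0)).sub (h0.const_mul (Real.log 2))).sub hlog
    simpa using this.congr (fun t => by ring)
  · simpa using (tendsto_const_nhds (x := (1:ℝ)) (f := atTop)).add h0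
  · -- lower bound eventually
    filter_upwards [eventually_ge_atTop (1:ℝ)] with t ht
    have ht0 : (0:ℝ) < t := by linarith
    set k := ⌈t⌉₊ with hkdef
    have hk1 : 1 ≤ k := Nat.one_le_iff_ne_zero.mpr (by
      simp [hkdef, Nat.ceil_eq_zero]; linarith)
    have hk0 : (0:ℝ) < (k:ℝ) := by exact_mod_cast Nat.pos_of_ne_zero (by omega)
    have hkt : t ≤ (k:ℝ) := Nat.le_ceil t
    have hkt1 : (k:ℝ) ≤ t + 1 := le_of_lt (Nat.ceil_lt_add_one ht0.le)
    have f1 := my_log_factorial_le k hk1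
    have f2 : (k:ℝ) - (k:ℝ)*(k:ℝ)/t ≤ (k:ℝ)*Real.log t - (k:ℝ)*Real.log k := by
      have h := my_log_ge (t/(k:ℝ)) (by positivity)
      rw [one_div_div, Real.log_div ht0.ne' hk0.ne'] at h
      have := mul_le_mul_of_nonneg_left h hk0.le
      have hx : (k:ℝ) * ((k:ℝ)/t) = (k:ℝ)*(k:ℝ)/t := by ring
      nlinarith [this]
    have f3 : Real.log k ≤ Real.log 2 + Real.log t := by
      rw [← Real.log_mul (by norm_num) ht0.ne']
      exact Real.log_le_log hk0 (by linarith)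
    have h6 : (k:ℝ)*(k:ℝ)/t ≤ t + 2 + t⁻¹ := by
      rw [div_le_iff₀ ht0]
      have hi : t⁻¹ * t = 1 := inv_mul_cancel₀ ht0.ne'
      nlinarith [hkt1, hk0.le]
    have key : t - 3 - t⁻¹ - Real.log 2 - Real.log t
        ≤ (k:ℝ)*Real.log t - Real.log (k.factorial : ℝ) := by linarith
    calc 1 - 3*t⁻¹ - t⁻¹*t⁻¹ - Real.log 2 * t⁻¹ - Real.log t / t
        = (t - 3 - t⁻¹ - Real.log 2 - Real.log t)/t := by field_simp
      _ ≤ ((k:ℝ)*Real.log t - Real.log (k.factorial : ℝ))/t := by gcongr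
  · -- upper bound eventually
    filter_upwards [eventually_ge_atTop (1:ℝ)] with t ht
    have ht0 : (0:ℝ) < t := by linarith
    set k := ⌈t⌉₊ with hkdef
    have hk0 : (0:ℝ) ≤ (k:ℝ) := by positivity
    have hkt : t ≤ (k:ℝ) := Nat.le_ceil t
    have hkt1 : (k:ℝ) ≤ t + 1 := le_of_lt (Nat.ceil_lt_add_one ht0.le)
    have f1 := my_log_factorial_ge k
    have hle : Real.log t ≤ Real.log k := Real.log_le_log ht0 hkt
    have key : (k:ℝ)*Real.log t - Real.log (k.factorial : ℝ) ≤ t + 1 := by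
      nlinarith [mul_le_mul_of_nonneg_left hle hk0]
    calc ((k:ℝ)*Real.log t - Real.log (k.factorial : ℝ))/t
        ≤ (t+1)/t := by gcongr
      _ = 1 + t⁻¹ := by field_simp

lemma my_summable {p : ℝ} (hp : 0 < p) (w : ℕ → ℝ) (hw0 : ∀ k, 0 ≤ w k) (hw1 : ∀ k, w k ≤ 1)
    (r : ℝ) (hr : 0 ≤ r) :
    Summable (fun k : ℕ => w k * r ^ k / (k.factorial : ℝ) ^ ((1:ℝ)/p)) := by
  apply Summable.of_nonneg_of_le (f := fun k : ℕ => ((1:ℝ)/2)^k * Real.exp ((2*r) ^ p / p))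
    (fun k => div_nonneg (mul_nonneg (hw0 k) (pow_nonneg hr k))
      (Real.rpow_nonneg (Nat.cast_nonneg _) _))
  · intro k
    have hc : (0:ℝ) < (k.factorial : ℝ) ^ ((1:ℝ)/p) :=
      Real.rpow_pos_of_pos (by exact_mod_cast k.factorial_pos) _
    have h1 : w k * r ^ k / (k.factorial : ℝ) ^ ((1:ℝ)/p)
        ≤ r ^ k / (k.factorial : ℝ) ^ ((1:ℝ)/p) := by
      have : w k * r ^ k ≤ r ^ k := by
        calc w k * r ^ k ≤ 1 * r ^ k :=
              mul_le_mul_of_nonneg_right (hw1 k) (pow_nonneg hr k)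
          _ = r ^ k := one_mul _
      exact div_le_div_of_nonneg_right this hc.le
    have h2 : r ^ k / (k.factorial : ℝ) ^ ((1:ℝ)/p)
        = ((1:ℝ)/2)^k * ((2*r) ^ k / (k.factorial : ℝ) ^ ((1:ℝ)/p)) := by
      rw [mul_div_assoc', ← mul_pow]; congr 2; ring
    have h3 := my_term_le hp (2*r) (by positivity) k
    calc w k * r ^ k / (k.factorial : ℝ) ^ ((1:ℝ)/p)
        ≤ ((1:ℝ)/2)^k * ((2*r) ^ k / (k.factorial : ℝ) ^ ((1:ℝ)/p)) := h1.trans_eq h2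
      _ ≤ ((1:ℝ)/2)^k * Real.exp ((2*r) ^ p / p) := by
          apply mul_le_mul_of_nonneg_left h3 (by positivity)
  · exact (summable_geometric_of_lt_one (by norm_num) (by norm_num)).mul_right _

lemma my_main {p : ℝ} (hp : 0 < p) (w : ℕ → ℝ) (hw0 : ∀ k, 0 < w k) (hw1 : ∀ k, w k ≤ 1)
    (hwlim : Tendsto (fun r : ℝ => Real.log (w ⌈r ^ p⌉₊) / r ^ p) atTop (nhds 0)) :
    Tendsto (fun r : ℝ => Real.log (∑' k : ℕ, w k * r ^ k / (k.factorial : ℝ) ^ ((1:ℝ)/p)) /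
      ((1/p) * r ^ p)) atTop (nhds 1) := by
  have hcomp : Tendsto (fun r : ℝ => r ^ p) atTop atTop := tendsto_rpow_atTop hp
  set glow : ℝ → ℝ := fun r => p * (Real.log (w ⌈r ^ p⌉₊) / r ^ p) +
      (((⌈r ^ p⌉₊ : ℕ):ℝ) * Real.log (r ^ p) - Real.log ((⌈r ^ p⌉₊ : ℕ).factorial : ℝ)) / r ^ p
    with hglow
  set gup : ℝ → ℝ := fun r => p * (Real.log r / r ^ p) + ((1 - r⁻¹)⁻¹) ^ p with hgup
  have hglowT : Tendsto glow atTop (nhds 1) := by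
    have h2 : Tendsto (fun r : ℝ =>
        (((⌈r ^ p⌉₊ : ℕ):ℝ) * Real.log (r ^ p) - Real.log ((⌈r ^ p⌉₊ : ℕ).factorial : ℝ)) / r ^ p)
        atTop (nhds 1) := my_tendsto_aux.comp hcomp
    simpa using (hwlim.const_mul p).add h2
  have hgupT : Tendsto gup atTop (nhds 1) := by
    have h1 : Tendsto (fun r : ℝ => Real.log r / r ^ p) atTop (nhds 0) :=
      (isLittleO_log_rpow_atTop hp).tendsto_div_nhds_zero
    have h2 : Tendsto (fun r : ℝ => (1 - r⁻¹)⁻¹) atTop (nhds 1) := by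
      have : Tendsto (fun r : ℝ => 1 - r⁻¹) atTop (nhds (1 - 0)) :=
        tendsto_const_nhds.sub tendsto_inv_atTop_zero
      rw [sub_zero] at this
      simpa using this.inv₀ (by norm_num)
    have h3 : Tendsto (fun r : ℝ => ((1 - r⁻¹)⁻¹) ^ p) atTop (nhds 1) := by
      have := (Real.continuousAt_rpow_const 1 p (Or.inl one_ne_zero)).tendsto.comp h2
      simpa [Real.one_rpow, Function.comp_def] using this
    simpa using (h1.const_mul p).add h3
  apply tendsto_of_tendsto_of_tendsto_of_le_of_le' hglowT hgupT
  · -- glow ≤ f eventually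
    filter_upwards [eventually_ge_atTop (2:ℝ)] with r hr
    have hr0 : (0:ℝ) < r := by linarith
    have ht0 : (0:ℝ) < r ^ p := Real.rpow_pos_of_pos hr0 p
    set k := ⌈r ^ p⌉₊ with hk
    have hs := my_summable hp w (fun k => (hw0 k).le) hw1 r hr0.le
    have hc : (0:ℝ) < (k.factorial : ℝ) ^ ((1:ℝ)/p) :=
      Real.rpow_pos_of_pos (by exact_mod_cast k.factorial_pos) _
    have htermpos : 0 < w k * r ^ k / (k.factorial : ℝ) ^ ((1:ℝ)/p) := by
      have := hw0 k; positivity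
    have hSge : w k * r ^ k / (k.factorial : ℝ) ^ ((1:ℝ)/p)
        ≤ ∑' j : ℕ, w j * r ^ j / (j.factorial : ℝ) ^ ((1:ℝ)/p) :=
      Summable.le_tsum hs k (fun j _ => div_nonneg (mul_nonneg (hw0 j).le (pow_nonneg hr0.le j))
        (Real.rpow_nonneg (Nat.cast_nonneg _) _))
    set S := ∑' j : ℕ, w j * r ^ j / (j.factorial : ℝ) ^ ((1:ℝ)/p) with hS
    have hS0 : 0 < S := htermpos.trans_le hSge
    have hfk : (0:ℝ) < (k.factorial : ℝ) := by exact_mod_cast k.factorial_pos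
    have e1 : Real.log (w k * r ^ k / (k.factorial : ℝ) ^ ((1:ℝ)/p))
        = Real.log (w k) + (k:ℝ) * Real.log r - (1/p) * Real.log (k.factorial:ℝ) := by
      rw [Real.log_div (mul_pos (hw0 k) (pow_pos hr0 k)).ne' hc.ne',
        Real.log_mul (hw0 k).ne' (pow_pos hr0 k).ne', Real.log_pow,
        Real.log_rpow hfk]
    have hX : Real.log (w k) + (k:ℝ) * Real.log r - (1/p) * Real.log (k.factorial:ℝ)
        ≤ Real.log S := by
      rw [← e1]; exact Real.log_le_log htermpos hSge
    have heq : glow r = (Real.log (w k) + (k:ℝ) * Real.log r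
        - (1/p) * Real.log (k.factorial:ℝ)) / ((1/p) * r ^ p) := by
      simp only [hglow, ← hk, Real.log_rpow hr0]
      field_simp
      ring
    calc glow r = _ := heq
      _ ≤ Real.log S / ((1/p) * r ^ p) :=
        div_le_div_of_nonneg_right hX (by positivity)
  · -- f ≤ gup eventually
    filter_upwards [eventually_ge_atTop (2:ℝ)] with r hr
    have hr0 : (0:ℝ) < r := by linarith
    have ht0 : (0:ℝ) < r ^ p := Real.rpow_pos_of_pos hr0 p
    have hs := my_summable hp w (fun k => (hw0 k).le) hw1 r hr0.le
    have hrinv : r⁻¹ ≤ (2:ℝ)⁻¹ := by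
      apply inv_anti₀ (by norm_num) hr
    have hrinv0 : 0 < r⁻¹ := by positivity
    set θ : ℝ := 1 - r⁻¹ with hθ
    have hθ0 : 0 < θ := by rw [hθ]; norm_num at hrinv ⊢; linarith
    have hθ1 : θ < 1 := by rw [hθ]; linarith
    set E : ℝ := Real.exp ((r/θ) ^ p / p) with hE
    have hE0 : 0 < E := Real.exp_pos _
    have hbound : ∀ j : ℕ, w j * r ^ j / (j.factorial : ℝ) ^ ((1:ℝ)/p) ≤ θ^j * E := by
      intro j
      have hc : (0:ℝ) < (j.factorial : ℝ) ^ ((1:ℝ)/p) :=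
        Real.rpow_pos_of_pos (by exact_mod_cast j.factorial_pos) _
      have h1 : w j * r ^ j ≤ r ^ j := by
        calc w j * r ^ j ≤ 1 * r ^ j :=
              mul_le_mul_of_nonneg_right (hw1 j) (pow_nonneg hr0.le j)
          _ = r ^ j := one_mul _
      have h2 : r ^ j / (j.factorial : ℝ) ^ ((1:ℝ)/p)
          = θ^j * ((r/θ) ^ j / (j.factorial : ℝ) ^ ((1:ℝ)/p)) := by
        rw [div_pow]
        field_simp
      have h3 := my_term_le hp (r/θ) (by positivity) j
      calc w j * r ^ j / (j.factorial : ℝ) ^ ((1:ℝ)/p)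
          ≤ r ^ j / (j.factorial : ℝ) ^ ((1:ℝ)/p) :=
            div_le_div_of_nonneg_right h1 hc.le
        _ = θ^j * ((r/θ) ^ j / (j.factorial : ℝ) ^ ((1:ℝ)/p)) := h2
        _ ≤ θ^j * E := mul_le_mul_of_nonneg_left h3 (by positivity)
    have hsum2 : Summable (fun j : ℕ => θ^j * E) :=
      (summable_geometric_of_lt_one hθ0.le hθ1).mul_right E
    set S := ∑' j : ℕ, w j * r ^ j / (j.factorial : ℝ) ^ ((1:ℝ)/p) with hS
    have hS0 : 0 < S := by
      have htermpos : 0 < w 0 * r ^ 0 / ((0:ℕ).factorial : ℝ) ^ ((1:ℝ)/p) := by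
        have := hw0 0; simp [Nat.factorial]; positivity
      exact htermpos.trans_le (Summable.le_tsum hs 0 (fun j _ => div_nonneg
        (mul_nonneg (hw0 j).le (pow_nonneg hr0.le j)) (Real.rpow_nonneg (Nat.cast_nonneg _) _)))
    have hSle : S ≤ r * E := by
      have h4 : S ≤ ∑' j : ℕ, θ^j * E := Summable.tsum_le_tsum hbound hs hsum2
      have h5 : ∑' j : ℕ, θ^j * E = (1-θ)⁻¹ * E := by
        rw [tsum_mul_right, tsum_geometric_of_lt_one hθ0.le hθ1]
      have h6 : (1-θ)⁻¹ = r := by rw [hθ]; simp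
      rw [h5, h6] at h4; exact h4
    have hlogS : Real.log S ≤ Real.log r + (r/θ) ^ p / p := by
      calc Real.log S ≤ Real.log (r * E) := Real.log_le_log hS0 hSle
        _ = Real.log r + (r/θ) ^ p / p := by rw [Real.log_mul hr0.ne' hE0.ne', hE, Real.log_exp]
    have heq : (Real.log r + (r/θ) ^ p / p) / ((1/p) * r ^ p) = gup r := by
      simp only [hgup, ← hθ]
      rw [Real.div_rpow hr0.le hθ0.le, Real.inv_rpow hθ0.le]
      have hθp : (0:ℝ) < θ ^ p := Real.rpow_pos_of_pos hθ0 p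
      field_simp
    calc Real.log S / ((1/p) * r ^ p)
        ≤ (Real.log r + (r/θ) ^ p / p) / ((1/p) * r ^ p) :=
          div_le_div_of_nonneg_right hlogS (by positivity)
      _ = gup r := heq

lemma my_sqrt_tendsto :
    Tendsto (fun t : ℝ => Real.sqrt (⌈t⌉₊ : ℝ) / t) atTop (nhds 0) := by
  have hsq : Tendsto Real.sqrt atTop atTop := by
    have h := tendsto_rpow_atTop (by norm_num : (0:ℝ) < 1/2)
    exact h.congr (fun x => (Real.sqrt_eq_rpow x).symm)
  have hupT : Tendsto (fun t : ℝ => (Real.sqrt t)⁻¹ + t⁻¹) atTop (nhds 0) := by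
    simpa using (hsq.inv_tendsto_atTop).add tendsto_inv_atTop_zero
  apply tendsto_of_tendsto_of_tendsto_of_le_of_le' (tendsto_const_nhds (x := (0:ℝ))) hupT
  · filter_upwards [eventually_ge_atTop (1:ℝ)] with t ht
    positivity
  · filter_upwards [eventually_ge_atTop (1:ℝ)] with t ht
    have ht0 : (0:ℝ) < t := by linarith
    have h1 : Real.sqrt (⌈t⌉₊ : ℝ) ≤ Real.sqrt t + 1 := by
      have h2 : (⌈t⌉₊ : ℝ) ≤ t + 1 := le_of_lt (Nat.ceil_lt_add_one ht0.le)
      calc Real.sqrt (⌈t⌉₊ : ℝ) ≤ Real.sqrt (t + 1) := Real.sqrt_le_sqrt h2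
        _ ≤ Real.sqrt t + 1 := by
          rw [Real.sqrt_le_iff]
          constructor
          · positivity
          · nlinarith [Real.sq_sqrt ht0.le, Real.sqrt_nonneg t]
    calc Real.sqrt (⌈t⌉₊ : ℝ) / t ≤ (Real.sqrt t + 1) / t := by gcongr
      _ = (Real.sqrt t)⁻¹ + t⁻¹ := by
        rw [add_div, Real.sqrt_div_self', one_div, one_div]


/-- the entire functions `Φ_p^{L,u}` and `Φ_{p,b}^{L,l}` and
their logarithmic asymptotics `∼ (1/p)·r^p`. -/
theorem stmt_17 (p b : ℝ) (hp : 0 < p) (hb : 0 < b) :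
    (∀ z : ℂ, Summable (fun k : ℕ =>
      ((1 / (k.factorial : ℝ) ^ ((1 : ℝ) / p) : ℝ) : ℂ) * z ^ k)) ∧
    (∀ z : ℂ, Summable (fun k : ℕ =>
      ((Real.exp (-b * Real.sqrt k) / (k.factorial : ℝ) ^ ((1 : ℝ) / p) : ℝ) : ℂ) * z ^ k)) ∧
    Filter.Tendsto (fun r : ℝ =>
        Real.log (∑' k : ℕ, r ^ k / (k.factorial : ℝ) ^ ((1 : ℝ) / p)) /
          ((1 / p) * r ^ p))
      Filter.atTop (nhds 1) ∧
    Filter.Tendsto (fun r : ℝ =>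
        Real.log (∑' k : ℕ,
            Real.exp (-b * Real.sqrt k) * r ^ k / (k.factorial : ℝ) ^ ((1 : ℝ) / p)) /
          ((1 / p) * r ^ p))
      Filter.atTop (nhds 1) := by
  have hpne : p ≠ 0 := hp.ne'
  -- weight functions
  set w1 : ℕ → ℝ := fun _ => 1 with hw1def
  set w2 : ℕ → ℝ := fun k => Real.exp (-b * Real.sqrt (k : ℝ)) with hw2def
  have hw1pos : ∀ k, (0:ℝ) < w1 k := fun _ => one_pos
  have hw1le : ∀ k, w1 k ≤ 1 := fun _ => le_refl 1
  have hw2pos : ∀ k, 0 < w2 k := fun k => Real.exp_pos _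
  have hw2le : ∀ k, w2 k ≤ 1 := by
    intro k
    rw [hw2def]
    apply Real.exp_le_one_iff.mpr
    have : (0:ℝ) ≤ Real.sqrt k := Real.sqrt_nonneg _
    nlinarith [hb.le]
  refine ⟨?_, ?_, ?_, ?_⟩
  · -- summability 1
    intro z
    apply Summable.of_norm
    apply (my_summable hp w1 (fun k => (hw1pos k).le) hw1le ‖z‖ (norm_nonneg z)).congr
    intro k
    rw [norm_mul, norm_pow, Complex.norm_real, Real.norm_eq_abs,
      abs_of_nonneg (by positivity), hw1def]
    ring
  · -- summability 2
    intro z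
    apply Summable.of_norm
    apply (my_summable hp w2 (fun k => (hw2pos k).le) hw2le ‖z‖ (norm_nonneg z)).congr
    intro k
    rw [norm_mul, norm_pow, Complex.norm_real, Real.norm_eq_abs,
      abs_of_nonneg (by positivity), hw2def]
    ring
  · -- asymptotics 1
    have hlim : Tendsto (fun r : ℝ => Real.log (w1 ⌈r ^ p⌉₊) / r ^ p) atTop (nhds 0) := by
      simp only [hw1def, Real.log_one, zero_div]
      exact tendsto_const_nhds
    have h := my_main hp w1 hw1pos hw1le hlim
    apply h.congr
    intro r
    congr 2
    apply tsum_congr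
    intro k
    rw [hw1def]
    ring
  · -- asymptotics 2
    have hlim : Tendsto (fun r : ℝ => Real.log (w2 ⌈r ^ p⌉₊) / r ^ p) atTop (nhds 0) := by
      have h := (my_sqrt_tendsto.comp (tendsto_rpow_atTop hp)).const_mul (-b)
      simp only [mul_zero] at h
      apply h.congr
      intro r
      simp only [Function.comp, hw2def, Real.log_exp]
      ring
    have h := my_main hp w2 hw2pos hw2le hlim
    exact h


end
end
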